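/- arXiv:1403.0934 — 7 statements merged into one kernel-verified Lean document; each statement's English description precedes it below -/
import Mathlib

section
/- Let G be a torsion-free abelian group, X a non-empty finite subset of G, and k, l non-zero integers with |k| ≠ |l|. Then |k·X + l·X| ≥ 3|X| − 2. -/
open Finset

section Step
variable {H : Type*} [DecidableEq H]

lemma dil_step {f : H → H → H} {X X' : Finset H} (hsub : X' ⊆ X)
    {t₁ t₂ t₃ : H}
    (h1 : t₁ ∈ image₂ f X X) (h2 : t₂ ∈ image₂ f X X) (h3 : t₃ ∈ image₂ f X X)
    (d12 : t₁ ≠ t₂) (d13 : t₁ ≠ t₃) (d23 : t₂ ≠ t₃)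
    (n1 : t₁ ∉ image₂ f X' X') (n2 : t₂ ∉ image₂ f X' X') (n3 : t₃ ∉ image₂ f X' X') :
    (image₂ f X' X').card + 3 ≤ (image₂ f X X).card := by
  have hins : insert t₁ (insert t₂ (insert t₃ (image₂ f X' X'))) ⊆ image₂ f X X := by
    intro s hs
    simp only [mem_insert] at hs
    rcases hs with rfl | rfl | rfl | hs
    · exact h1
    · exact h2
    · exact h3
    · exact image₂_subset hsub hsub hs
  have c3 : (insert t₃ (image₂ f X' X')).card = (image₂ f X' X').card + 1 :=
    card_insert_of_notMem n3
  have c2 : (insert t₂ (insert t₃ (image₂ f X' X'))).card = (image₂ f X' X').card + 2 := by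
    rw [card_insert_of_notMem, c3]
    simp only [mem_insert, not_or]
    exact ⟨d23, n2⟩
  have c1 : (insert t₁ (insert t₂ (insert t₃ (image₂ f X' X')))).card
      = (image₂ f X' X').card + 3 := by
    rw [card_insert_of_notMem, c2]
    simp only [mem_insert, not_or]
    exact ⟨d12, d13, n1⟩
  calc (image₂ f X' X').card + 3 = _ := c1.symm
    _ ≤ (image₂ f X X).card := card_le_card hins

end Step

section Key
variable {H : Type*} [AddCommGroup H] [LinearOrder H] [IsOrderedAddMonoid H]

lemma dil_key (k l : ℤ) (hk : 0 < k) (hl : l ≠ 0) (hlk : |l| < k) :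
    ∀ X : Finset H, X.Nonempty →
      3 * X.card - 2 ≤ (image₂ (fun x y => k • x + l • y) X X).card := by
  classical
  have hknel : k - l ≠ 0 := by
    have : l ≤ |l| := le_abs_self l
    omega
  intro X
  induction X using Finset.strongInduction with
  | _ X ih =>
  intro hX
  by_cases hcard : X.card ≤ 1
  · have h1 : 1 ≤ (image₂ (fun x y => k • x + l • y) X X).card :=
      card_pos.2 (hX.image₂ hX)
    omega
  push_neg at hcard
  set f : H → H → H := fun x y => k • x + l • y with hf
  -- min and max of X
  set b := X.max' hX with hbdef
  set a := X.min' hX with hadef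
  have hbX : b ∈ X := X.max'_mem hX
  have haX : a ∈ X := X.min'_mem hX
  have hab : a < b := X.min'_lt_max'_of_card hcard
  set Xa := X.erase a with hXa
  set Xb := X.erase b with hXb
  have hXacard : Xa.card = X.card - 1 := card_erase_of_mem haX
  have hXbcard : Xb.card = X.card - 1 := card_erase_of_mem hbX
  have hXane : Xa.Nonempty := card_pos.1 (by omega)
  have hXbne : Xb.Nonempty := card_pos.1 (by omega)
  set a2 := Xa.min' hXane with ha2def
  set b1 := Xb.max' hXbne with hb1def
  have ha2X : a2 ∈ X := mem_of_mem_erase (Xa.min'_mem hXane)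
  have hb1X : b1 ∈ X := mem_of_mem_erase (Xb.max'_mem hXbne)
  have haa2 : a < a2 :=
    lt_of_le_of_ne (X.min'_le a2 ha2X) (Ne.symm (ne_of_mem_erase (Xa.min'_mem hXane)))
  have hb1b : b1 < b :=
    lt_of_le_of_ne (X.le_max' b1 hb1X) (ne_of_mem_erase (Xb.max'_mem hXbne))
  -- basic smul monotonicity helpers
  have kmono : ∀ {u v : H}, u ≤ v → k • u ≤ k • v := fun h => zsmul_le_zsmul_right hk.le h
  have kstrict : ∀ {u v : H}, u < v → k • u < k • v := fun h => zsmul_lt_zsmul_right hk h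
  rcases lt_or_gt_of_ne hl with hlneg | hlpos
  · -- case l < 0
    have hnl : 0 < -l := by omega
    have lmono : ∀ {u v : H}, u ≤ v → l • v ≤ l • u := by
      intro u v h
      have := zsmul_le_zsmul_right hnl.le h
      rw [neg_zsmul, neg_zsmul] at this
      exact neg_le_neg_iff.1 this
    have lstrict : ∀ {u v : H}, u < v → l • v < l • u := by
      intro u v h
      have := zsmul_lt_zsmul_right hnl h
      rw [neg_zsmul, neg_zsmul] at this
      exact neg_lt_neg_iff.1 this
    have linj : ∀ {u v : H}, l • u = l • v → u = v := fun h => zsmul_right_injective hl h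
    by_cases hc : k • b + l • a2 ≤ k • b1 + l • a
    · -- remove the minimum a ; X' = Xa
      have hmaxXa : Xa.max' hXane = b :=
        le_antisymm (X.le_max' _ (mem_of_mem_erase (Xa.max'_mem hXane)))
          (Xa.le_max' b (mem_erase.2 ⟨(ne_of_gt hab), hbX⟩))
      have lower : ∀ s ∈ image₂ f Xa Xa, k • a2 + l • b ≤ s := by
        intro s hs
        obtain ⟨x, hx, y, hy, rfl⟩ := mem_image₂.1 hs
        exact add_le_add (kmono (Xa.min'_le x hx))
          (lmono (by rw [← hmaxXa]; exact Xa.le_max' y hy))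
      have upper : ∀ s ∈ image₂ f Xa Xa, s ≤ k • b + l • a2 := by
        intro s hs
        obtain ⟨x, hx, y, hy, rfl⟩ := mem_image₂.1 hs
        exact add_le_add (kmono (by rw [← hmaxXa]; exact Xa.le_max' x hx))
          (lmono (Xa.min'_le y hy))
      have hlu : k • a2 + l • b ≤ k • b + l • a2 := by
        obtain ⟨s, hs⟩ := (hXane.image₂ hXane (f := f))
        exact le_trans (lower s hs) (upper s hs)
      -- the three new elements
      have ht1 : k • b + l • a2 < k • b + l • a := add_lt_add_right (lstrict haa2) _
      have ht2 : k • a + l • b < k • a2 + l • b := add_lt_add_left (kstrict haa2) _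
      -- derived inequality for t₃
      have ht3 : k • a + l • b1 < k • a2 + l • b := by
        have hδ : (0:H) < a2 - a := sub_pos.2 haa2
        have h1 : k • (b - b1) ≤ (-l) • (a2 - a) := by
          rw [← sub_nonneg]
          have e : (-l) • (a2 - a) - k • (b - b1)
              = (k • b1 + l • a) - (k • b + l • a2) := by
            rw [smul_sub, smul_sub, neg_zsmul, neg_zsmul]
            abel
          rw [e, sub_nonneg]
          exact hc
        have h2 : (-l) • (b - b1) < k • (a2 - a) := by
          have t1 : ((-l) * k) • (b - b1) ≤ ((-l) * (-l)) • (a2 - a) := by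
            rw [mul_zsmul, mul_zsmul]
            exact zsmul_le_zsmul_right hnl.le h1
          have t2 : ((-l) * (-l)) • (a2 - a) < (k * k) • (a2 - a) := by
            apply zsmul_lt_zsmul_left hδ
            have h3 : |l| * |l| < k * k :=
              mul_lt_mul'' hlk hlk (abs_nonneg l) (abs_nonneg l)
            rw [abs_mul_abs_self] at h3
            nlinarith
          have t3 : (k * (-l)) • (b - b1) < (k * k) • (a2 - a) := by
            rw [mul_comm k (-l)]
            exact lt_of_le_of_lt t1 t2
          rw [mul_zsmul, mul_zsmul] at t3
          exact (zsmul_lt_zsmul_iff_right hk).1 t3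
        rw [← sub_pos]
        have e : (k • a2 + l • b) - (k • a + l • b1)
            = k • (a2 - a) - (-l) • (b - b1) := by
          rw [smul_sub, smul_sub, neg_zsmul, neg_zsmul]
          abel
        rw [e, sub_pos]
        exact h2
      refine le_trans ?_ (dil_step (erase_subset a X)
        (mem_image₂_of_mem hbX haX) (mem_image₂_of_mem haX hbX)
        (mem_image₂_of_mem haX hb1X) ?_ ?_ ?_ ?_ ?_ ?_)
      · have := ih Xa (erase_ssubset haX) hXane
        rw [← hXa]
        omega
      · exact ne_of_gt (lt_trans (lt_of_lt_of_le ht2 hlu) ht1)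
      · exact ne_of_gt (lt_trans (lt_of_lt_of_le ht3 hlu) ht1)
      · intro h
        exact (ne_of_lt hb1b) (linj (add_left_cancel h)).symm
      · intro h
        exact absurd (upper _ h) (not_le.2 ht1)
      · intro h
        exact absurd (lower _ h) (not_le.2 ht2)
      · intro h
        exact absurd (lower _ h) (not_le.2 ht3)
    · -- remove the maximum b ; X' = Xb
      push_neg at hc
      have hminXb : Xb.min' hXbne = a :=
        le_antisymm (Xb.min'_le a (mem_erase.2 ⟨(ne_of_lt hab), haX⟩))
          (X.min'_le _ (mem_of_mem_erase (Xb.min'_mem hXbne)))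
      have lower : ∀ s ∈ image₂ f Xb Xb, k • a + l • b1 ≤ s := by
        intro s hs
        obtain ⟨x, hx, y, hy, rfl⟩ := mem_image₂.1 hs
        exact add_le_add (kmono (by rw [← hminXb]; exact Xb.min'_le x hx))
          (lmono (Xb.le_max' y hy))
      have upper : ∀ s ∈ image₂ f Xb Xb, s ≤ k • b1 + l • a := by
        intro s hs
        obtain ⟨x, hx, y, hy, rfl⟩ := mem_image₂.1 hs
        exact add_le_add (kmono (Xb.le_max' x hx))
          (lmono (by rw [← hminXb]; exact Xb.min'_le y hy))
      have hlu : k • a + l • b1 ≤ k • b1 + l • a := by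
        obtain ⟨s, hs⟩ := (hXbne.image₂ hXbne (f := f))
        exact le_trans (lower s hs) (upper s hs)
      have ht1 : k • b1 + l • a < k • b + l • a := add_lt_add_left (kstrict hb1b) _
      have ht2 : k • b1 + l • a < k • b + l • a2 := hc
      have ht3 : k • a + l • b < k • a + l • b1 := add_lt_add_right (lstrict hb1b) _
      refine le_trans ?_ (dil_step (erase_subset b X)
        (mem_image₂_of_mem hbX haX) (mem_image₂_of_mem hbX ha2X)
        (mem_image₂_of_mem haX hbX) ?_ ?_ ?_ ?_ ?_ ?_)
      · have := ih Xb (erase_ssubset hbX) hXbne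
        rw [← hXb]
        omega
      · intro h
        exact (ne_of_lt haa2) (linj (add_left_cancel h))
      · exact ne_of_gt (lt_trans (lt_of_lt_of_le ht3 hlu) ht1)
      · exact ne_of_gt (lt_trans (lt_of_lt_of_le ht3 hlu) ht2)
      · intro h
        exact absurd (upper _ h) (not_le.2 ht1)
      · intro h
        exact absurd (upper _ h) (not_le.2 ht2)
      · intro h
        exact absurd (lower _ h) (not_le.2 ht3)
  · -- case l > 0 : remove the maximum b ; X' = Xb
    have lmono : ∀ {u v : H}, u ≤ v → l • u ≤ l • v := fun h => zsmul_le_zsmul_right hlpos.le h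
    have lstrict : ∀ {u v : H}, u < v → l • u < l • v := fun h => zsmul_lt_zsmul_right hlpos h
    have linj : ∀ {u v : H}, l • u = l • v → u = v := fun h => zsmul_right_injective hl h
    have kinj : ∀ {u v : H}, k • u = k • v → u = v :=
      fun h => zsmul_right_injective (ne_of_gt hk) h
    set c := Xb.max' hXbne with hcdef
    have hcX : c ∈ X := mem_of_mem_erase (Xb.max'_mem hXbne)
    have hcb : c < b :=
      lt_of_le_of_ne (X.le_max' c hcX) (ne_of_mem_erase (Xb.max'_mem hXbne))
    have upper : ∀ s ∈ image₂ f Xb Xb, s ≤ k • c + l • c := by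
      intro s hs
      obtain ⟨x, hx, y, hy, rfl⟩ := mem_image₂.1 hs
      exact add_le_add (kmono (Xb.le_max' x hx)) (lmono (Xb.le_max' y hy))
    have ht1 : k • c + l • c < k • b + l • b := add_lt_add (kstrict hcb) (lstrict hcb)
    have ht2 : k • c + l • c < k • b + l • c := add_lt_add_left (kstrict hcb) _
    have ht3 : k • c + l • c < k • c + l • b := add_lt_add_right (lstrict hcb) _
    refine le_trans ?_ (dil_step (erase_subset b X)
      (mem_image₂_of_mem hbX hbX) (mem_image₂_of_mem hbX hcX)
      (mem_image₂_of_mem hcX hbX) ?_ ?_ ?_ ?_ ?_ ?_)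
    · have := ih Xb (erase_ssubset hbX) hXbne
      rw [← hXb]
      omega
    · intro h
      exact (ne_of_gt hcb) (linj (add_left_cancel h))
    · intro h
      exact (ne_of_gt hcb) (kinj (add_right_cancel h))
    · intro h
      have hh : k • b + l • c = k • c + l • b := h
      have h' : (k - l) • (b - c) = (0 : H) := by
        rw [sub_smul, smul_sub, smul_sub, sub_eq_zero, sub_eq_sub_iff_add_eq_add, hh, add_comm]
      have hbc : b - c = 0 := zsmul_right_injective hknel (h'.trans (smul_zero (k - l)).symm)
      exact (ne_of_gt (sub_pos.2 hcb)) hbc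
    · intro h
      exact absurd (upper _ h) (not_le.2 ht1)
    · intro h
      exact absurd (upper _ h) (not_le.2 ht2)
    · intro h
      exact absurd (upper _ h) (not_le.2 ht3)

end Key

open Finset

section Transfer
variable {H H' : Type*} [AddCommGroup H] [AddCommGroup H'] [DecidableEq H] [DecidableEq H']

lemma dil_transfer (φ : H →+ H') (hφ : Function.Injective φ) (k l : ℤ) (X : Finset H) :
    (image₂ (fun x y => k • x + l • y) (X.image φ) (X.image φ)).card
      = (image₂ (fun x y => k • x + l • y) X X).card := by
  rw [image₂_image_left, image₂_image_right]
  have h : image₂ (fun x y => k • (φ x) + l • (φ y)) X X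
      = (image₂ (fun x y => k • x + l • y) X X).image φ := by
    rw [image_image₂]
    apply image₂_congr
    intro x _ y _
    simp [map_add, map_zsmul]
  rw [h, card_image_of_injective _ hφ]

end Transfer

section Ordered
variable {H : Type*} [AddCommGroup H] [DecidableEq H]

lemma dil_swap (k l : ℤ) (X : Finset H) :
    image₂ (fun x y => k • x + l • y) X X = image₂ (fun x y => l • x + k • y) X X :=
  image₂_comm fun a b => add_comm _ _

lemma dil_neg_card (k l : ℤ) (X : Finset H) :
    (image₂ (fun x y => (-k) • x + (-l) • y) X X).card
      = (image₂ (fun x y => k • x + l • y) X X).card := by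
  have h : image₂ (fun x y => (-k) • x + (-l) • y) X X
      = (image₂ (fun x y => k • x + l • y) X X).image (fun z => -z) := by
    rw [image_image₂]
    apply image₂_congr
    intro x _ y _
    simp only [neg_zsmul, neg_add]
  rw [h, card_image_of_injective _ neg_injective]

end Ordered

lemma dil_ordered {H : Type*} [AddCommGroup H] [LinearOrder H] [IsOrderedAddMonoid H]
    (k l : ℤ) (hk : k ≠ 0) (hl : l ≠ 0) (hkl : k.natAbs ≠ l.natAbs)
    (X : Finset H) (hX : X.Nonempty) :
    3 * X.card - 2 ≤ (image₂ (fun x y => k • x + l • y) X X).card := by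
  wlog h : l.natAbs < k.natAbs generalizing k l
  · rw [dil_swap]
    exact this l k hl hk hkl.symm (by omega)
  rcases lt_or_gt_of_ne hk with hkneg | hkpos
  · rw [← dil_neg_card]
    refine dil_key (-k) (-l) (by omega) (by omega) ?_ X hX
    have h1 : |(-l)| = ((-l).natAbs : ℤ) := Int.abs_eq_natAbs _
    omega
  · refine dil_key k l hkpos hl ?_ X hX
    have h1 : |l| = (l.natAbs : ℤ) := Int.abs_eq_natAbs _
    omega


theorem dilates_lower_bound_torsion_free_abelian
    {G : Type*} [AddCommGroup G] [DecidableEq G]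
    (hG : ∀ g : G, g ≠ 0 → ¬IsOfFinAddOrder g)
    (k l : ℤ) (hk : k ≠ 0) (hl : l ≠ 0) (hkl : k.natAbs ≠ l.natAbs)
    (X : Finset G) (hX : X.Nonempty) :
    3 * X.card - 2 ≤ (Finset.image₂ (fun x y => k • x + l • y) X X).card := by
  classical
  haveI : IsAddTorsionFree G := IsAddTorsionFree.of_not_isOfFinAddOrder hG
  set p : Submodule ℤ G := Submodule.span ℤ (X : Set G) with hp
  haveI : Module.Finite ℤ p := Module.Finite.span_finset ℤ X
  haveI : Module.Free ℤ p := Module.free_of_finite_type_torsion_free'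
  set ι := Module.Free.ChooseBasisIndex ℤ p with hι
  let bb := (Module.Free.chooseBasis ℤ p).reindex (Fintype.equivFin ι)
  let e := bb.repr
  let H := Lex (Fin (Fintype.card ι) →₀ ℤ)
  let ψ : p →+ H :=
    { toFun := fun v => toLex (e v)
      map_zero' := by simp
      map_add' := fun x y => by simp [map_add] }
  have hψ : Function.Injective ψ := fun u v h => e.injective (toLex.injective h)
  let ι₀ : p →+ G := (Submodule.subtype p).toAddMonoidHom
  have hι₀ : Function.Injective ι₀ := Subtype.val_injective
  let X₀ : Finset p := X.attach.map
    ⟨fun x => (⟨x.1, Submodule.subset_span x.2⟩ : p),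
     by intro u v h; rw [Subtype.mk.injEq] at h; exact Subtype.ext h⟩
  have hX₀card : X₀.card = X.card := by simp [X₀]
  have hX₀ne : X₀.Nonempty := by
    rw [← Finset.card_pos, hX₀card, Finset.card_pos]; exact hX
  have himg : X₀.image ι₀ = X := by
    ext g
    simp only [X₀, Finset.mem_image, Finset.mem_map, Finset.mem_attach,
      Function.Embedding.coeFn_mk, true_and]
    constructor
    · rintro ⟨v, ⟨x, rfl⟩, rfl⟩
      exact x.2
    · intro hg
      exact ⟨⟨g, Submodule.subset_span hg⟩, ⟨⟨g, hg⟩, rfl⟩, rfl⟩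
  have e1 : (Finset.image₂ (fun x y => k • x + l • y) X X).card
      = (Finset.image₂ (fun x y => k • x + l • y) X₀ X₀).card := by
    rw [← himg]
    exact dil_transfer ι₀ hι₀ k l X₀
  have e2 : (Finset.image₂ (fun x y => k • x + l • y) X₀ X₀).card
      = (Finset.image₂ (fun x y => k • x + l • y) (X₀.image ψ) (X₀.image ψ)).card :=
    (dil_transfer ψ hψ k l X₀).symm
  have hYne : (X₀.image ψ).Nonempty := hX₀ne.image ψ
  have hYcard : (X₀.image ψ).card = X.card := by
    rw [Finset.card_image_of_injective _ hψ, hX₀card]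
  rw [e1, e2, ← hYcard]
  have hfin := dil_ordered k l hk hl hkl (X₀.image ψ) hYne
  convert hfin using 4
end

section
/- Let X be a non-empty finite subset of ℤ^n that generates ℤ^n as a group and contains 0, and suppose the gcd of all coordinates of all elements of X equals 1. Let k and l be coprime non-zero integers with |l| ≥ 2. Then the set k·X does not lie in a single coset of the subgroup generated by l·X; in particular k·X meets at least two distinct cosets of ⟨l·X⟩. -/
theorem dilate_meets_two_cosets
    (n : ℕ) (hn : 1 ≤ n) (X : Finset (Fin n → ℤ)) (hX : X.Nonempty)
    (h0 : (0 : Fin n → ℤ) ∈ X)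
    (hgen : AddSubgroup.closure (X : Set (Fin n → ℤ)) = ⊤)
    (hgcd : ∀ d : ℤ, (∀ x ∈ X, ∀ i : Fin n, d ∣ x i) → IsUnit d)
    (k l : ℤ) (hk : k ≠ 0) (hl : 2 ≤ l.natAbs) (hkl : IsCoprime k l) :
    ¬ ∀ x ∈ X, ∀ y ∈ X,
        k • x - k • y ∈
          AddSubgroup.closure ((X.image fun x => l • x : Finset (Fin n → ℤ)) :
            Set (Fin n → ℤ)) := by
  intro h
  have hmap : AddSubgroup.closure ((X.image fun x => l • x : Finset (Fin n → ℤ)) :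
      Set (Fin n → ℤ))
      = AddSubgroup.map (zsmulAddGroupHom l) (AddSubgroup.closure (X : Set (Fin n → ℤ))) := by
    rw [AddMonoidHom.map_closure, Finset.coe_image]
    rfl
  have key : ∀ x ∈ X, ∀ i : Fin n, l ∣ x i := by
    intro x hx i
    have hmem := h x hx 0 h0
    rw [smul_zero, sub_zero, hmap, hgen] at hmem
    obtain ⟨z, -, hz⟩ := hmem
    have hzi : l * z i = k * x i := congrFun hz i
    have hdvd : l ∣ k * x i := ⟨z i, hzi.symm⟩
    exact hkl.symm.dvd_of_dvd_mul_left hdvd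
  have := Int.isUnit_iff_natAbs_eq.mp (hgcd l key)
  omega
end

section
/- Let k and l be non-zero integers with k ≠ −l. In the free group F on two generators a, b, the element a^k b^l a^{−l} b^{−k} is not a proper power: there is no element x ∈ F and integer t ≥ 2 with a^k b^l a^{−l} b^{−k} = x^t. -/
namespace CWNPP
open FreeGroup

abbrev Ltr := Bool × Bool

def inv1 (x : Ltr) : Ltr := (x.1, !x.2)

lemma inv1_inv1 (x : Ltr) : inv1 (inv1 x) = x := by cases x; simp [inv1]

lemma inv1_eq_comm {x y : Ltr} : x = inv1 y ↔ y = inv1 x := by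
  have : ∀ x y : Ltr, (x = (y.1, !y.2)) ↔ (y = (x.1, !x.2)) := by decide
  exact this x y

def Rd (x y : Ltr) : Prop := y ≠ inv1 x

lemma rd_iff {x y : Ltr} : Rd x y ↔ ¬ (x.1 = y.1 ∧ x.2 = !y.2) := by
  have : ∀ x y : Ltr, (y ≠ (x.1, !x.2)) ↔ ¬ (x.1 = y.1 ∧ x.2 = !y.2) := by decide
  exact this x y

lemma rd_symm {x y : Ltr} (h : Rd x y) : Rd (inv1 y) (inv1 x) := by
  show inv1 x ≠ inv1 (inv1 y)
  rw [inv1_inv1]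
  intro he; exact h he.symm

def Reduced (L : List Ltr) : Prop := List.IsChain Rd L

lemma reduce_eq_self : ∀ {L : List Ltr}, Reduced L → FreeGroup.reduce L = L
  | [], _ => rfl
  | [x], _ => rfl
  | x :: y :: L, h => by
    have h' : FreeGroup.reduce (y :: L) = y :: L := reduce_eq_self (List.IsChain.tail h)
    rw [FreeGroup.reduce.cons, h']
    have : ¬ (x.1 = y.1 ∧ x.2 = !y.2) := rd_iff.mp (List.isChain_cons_cons.mp h).1
    simp [this]

lemma reduced_reduce (L : List Ltr) : Reduced (FreeGroup.reduce L) := by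
  induction L with
  | nil => exact List.isChain_nil
  | cons x L ih =>
    rw [FreeGroup.reduce.cons]
    rcases hR : FreeGroup.reduce L with _ | ⟨y, t⟩
    · exact List.isChain_singleton x
    · rw [hR] at ih
      by_cases hc : x.1 = y.1 ∧ x.2 = !y.2
      · simp only [hc, if_true]
        exact ih.tail
      · simp only [hc, if_false]
        exact List.isChain_cons_cons.mpr ⟨rd_iff.mpr hc, ih⟩

lemma reduced_toWord (x : FreeGroup Bool) : Reduced (toWord x) := by
  have := FreeGroup.reduce_toWord x
  rw [← this]
  exact reduced_reduce _

lemma toWord_mk_reduced {L : List Ltr} (h : Reduced L) : (FreeGroup.mk L).toWord = L := by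
  rw [FreeGroup.toWord_mk, reduce_eq_self h]

lemma reduced_infix {L M : List Ltr} (h : Reduced L) (hM : M <:+: L) : Reduced M :=
  List.IsChain.infix h hM

def CycRed (L : List Ltr) : Prop :=
  Reduced L ∧ ∀ x ∈ L.head?, ∀ y ∈ L.getLast?, Rd y x

lemma cycRed_nil : CycRed [] := ⟨List.isChain_nil, by simp⟩

lemma mul_toWord {L₁ L₂ : List Ltr} (h : Reduced (L₁ ++ L₂)) :
    (FreeGroup.mk L₁ * FreeGroup.mk L₂).toWord = L₁ ++ L₂ := by
  rw [FreeGroup.mul_mk, toWord_mk_reduced h]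

lemma invRev_cons (x : Ltr) (L : List Ltr) :
    FreeGroup.invRev (x :: L) = FreeGroup.invRev L ++ [inv1 x] := by
  simp [FreeGroup.invRev, inv1]

lemma invRev_singleton (x : Ltr) : FreeGroup.invRev [x] = [inv1 x] := by
  simp [FreeGroup.invRev, inv1]

lemma getLast?_invRev (L : List Ltr) :
    (FreeGroup.invRev L).getLast? = L.head?.map inv1 := by
  cases L with
  | nil => simp [FreeGroup.invRev]
  | cons x L => rw [invRev_cons]; simp [inv1]

/-- `n`-fold concatenation. -/
def repL : ℕ → List Ltr → List Ltr
  | 0, _ => []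
  | n+1, L => L ++ repL n L

lemma repL_comm (n : ℕ) (L : List Ltr) : repL n L ++ L = L ++ repL n L := by
  induction n with
  | zero => simp [repL]
  | succ n ih => simp only [repL, List.append_assoc, ih]

lemma repL_succ' (n : ℕ) (L : List Ltr) : repL (n+1) L = repL n L ++ L := by
  rw [repL_comm]; rfl

lemma repL_length (n : ℕ) (L : List Ltr) : (repL n L).length = n * L.length := by
  induction n with
  | zero => simp [repL]
  | succ n ih => simp [repL, ih, Nat.succ_mul, Nat.add_comm]

lemma head?_repL (n : ℕ) (L : List Ltr) (hL : L ≠ []) (hn : n ≠ 0) :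
    (repL n L).head? = L.head? := by
  cases n with
  | zero => exact absurd rfl hn
  | succ n => rw [repL, List.head?_append_of_ne_nil _ hL]

lemma getLast?_repL (n : ℕ) (L : List Ltr) (hL : L ≠ []) (hn : n ≠ 0) :
    (repL n L).getLast? = L.getLast? := by
  cases n with
  | zero => exact absurd rfl hn
  | succ n => rw [repL_succ', List.getLast?_append_of_ne_nil _ hL]

lemma reduced_repL {L : List Ltr} (h : CycRed L) (n : ℕ) : Reduced (repL n L) := by
  induction n with
  | zero => exact List.isChain_nil
  | succ n ih =>
    rcases Decidable.em (L = []) with rfl | hL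
    · simpa [repL] using ih
    rcases Nat.eq_zero_or_pos n with rfl | hn
    · simpa [repL] using h.1
    rw [repL]
    rw [Reduced, List.isChain_append]
    refine ⟨h.1, ih, ?_⟩
    intro x hx y hy
    rw [head?_repL n L hL (by omega)] at hy
    exact h.2 y hy x hx

lemma cycRed_repL {L : List Ltr} (h : CycRed L) (n : ℕ) (hL : L ≠ []) (hn : n ≠ 0) :
    CycRed (repL n L) := by
  refine ⟨reduced_repL h n, ?_⟩
  intro x hx y hy
  rw [head?_repL n L hL hn] at hx
  rw [getLast?_repL n L hL hn] at hy
  exact h.2 x hx y hy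

lemma rd_self (a : Ltr) : Rd a a := by
  intro he
  have := congrArg Prod.snd he
  simp [inv1] at this

lemma toWord_pow {c : FreeGroup Bool} (h : CycRed (toWord c)) (n : ℕ) :
    (c ^ n).toWord = repL n (toWord c) := by
  induction n with
  | zero => simp [repL, FreeGroup.toWord_one]
  | succ n ih =>
    have : c ^ (n+1) = FreeGroup.mk (toWord c ++ repL n (toWord c)) := by
      rw [← FreeGroup.mul_mk, ← ih, FreeGroup.mk_toWord, FreeGroup.mk_toWord, pow_succ']
    rw [this]
    exact toWord_mk_reduced (reduced_repL h (n+1))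

lemma exists_cycred : ∀ (x : FreeGroup Bool), x ≠ 1 →
    ∃ g c, x = g * c * g⁻¹ ∧ c ≠ 1 ∧ CycRed (toWord c) := by
  suffices H : ∀ n (x : FreeGroup Bool), (toWord x).length = n → x ≠ 1 →
      ∃ g c, x = g * c * g⁻¹ ∧ c ≠ 1 ∧ CycRed (toWord c) by
    exact fun x hx => H _ x rfl hx
  intro n
  induction n using Nat.strong_induction_on with
  | _ n ih =>
  intro x hn hx
  by_cases hc : CycRed (toWord x)
  · exact ⟨1, x, by simp, hx, hc⟩
  have hred := reduced_toWord x
  obtain ⟨h, hh, z, hz, hrz⟩ : ∃ h ∈ (toWord x).head?, ∃ z ∈ (toWord x).getLast?, ¬ Rd z h := by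
    by_contra hcon
    push_neg at hcon
    exact hc ⟨hred, fun a ha b hb => hcon a ha b hb⟩
  rcases hL : toWord x with _ | ⟨a, t⟩
  · exact absurd (FreeGroup.toWord_eq_nil_iff.mp hL) hx
  rw [hL] at hh hz hred
  rcases List.eq_nil_or_concat t with rfl | ⟨M, z', rfl⟩
  · -- single letter word: cyclic reduction can't fail
    simp only [List.head?_cons, Option.mem_some_iff] at hh
    simp only [List.getLast?_singleton, Option.mem_some_iff] at hz
    subst hh; subst hz
    exact absurd (rd_self _) hrz
  simp only [List.head?_cons, Option.mem_some_iff] at hh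
  subst hh
  have hz' : z = z' := by
    rw [show a :: M.concat z' = (a :: M) ++ [z'] by simp [List.concat_eq_append],
      List.getLast?_concat] at hz
    exact (show z' = z by simpa using hz).symm
  subst hz'
  have hzh : z = inv1 a := by
    have : a = inv1 z := by
      by_contra hne
      exact hrz hne
    exact inv1_eq_comm.mp this
  have hlist : a :: M.concat z = [a] ++ M ++ [inv1 a] := by
    rw [← hzh]; simp [List.concat_eq_append]
  have hxeq : x = FreeGroup.mk [a] * FreeGroup.mk M * (FreeGroup.mk [a])⁻¹ := by
    rw [FreeGroup.inv_mk, invRev_singleton, FreeGroup.mul_mk, FreeGroup.mul_mk,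
      show [a] ++ M ++ [inv1 a] = a :: M.concat z by rw [hlist], ← hL, FreeGroup.mk_toWord]
  have hMred : Reduced M := reduced_infix hred (by rw [hlist]; exact ⟨[a], [inv1 a], rfl⟩)
  have hMW : toWord (FreeGroup.mk M) = M := toWord_mk_reduced hMred
  have hMne : M ≠ [] := by
    rintro rfl
    have : Rd a z := by
      have hred' := hred
      simp only [List.concat_eq_append, List.nil_append] at hred'
      exact (List.isChain_cons_cons.mp hred').1
    exact this hzh
  have hM1 : FreeGroup.mk M ≠ 1 := fun h1 => hMne (by rw [← hMW, h1, FreeGroup.toWord_one])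
  have hlen : M.length < n := by
    rw [← hn, hL]
    simp [List.concat_eq_append]
  obtain ⟨g', c, hgc, hc1, hcyc⟩ := ih M.length hlen (FreeGroup.mk M) (by rw [hMW]) hM1
  refine ⟨FreeGroup.mk [a] * g', c, ?_, hc1, hcyc⟩
  rw [hxeq, hgc, mul_inv_rev]
  group

lemma mk_cancel (s : Ltr) : FreeGroup.mk [s] * FreeGroup.mk [inv1 s] = 1 := by
  rw [← invRev_singleton, ← FreeGroup.inv_mk, mul_inv_cancel]

lemma rd_iff' {x y : Ltr} : Rd x y ↔ y ≠ inv1 x := Iff.rfl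

lemma inv1_injective : Function.Injective inv1 := by
  intro a b h
  rw [← inv1_inv1 a, h, inv1_inv1]

/-- Structure of a conjugate of a cyclically reduced word. -/
lemma conj_struct : ∀ (gL : List Ltr), Reduced gL → ∀ (vL : List Ltr), CycRed vL → vL ≠ [] →
    ∃ (w p : List Ltr) (n : ℕ), w = vL.rotate n ∧ CycRed w ∧ p <+: gL ∧
      toWord (FreeGroup.mk gL * FreeGroup.mk vL * (FreeGroup.mk gL)⁻¹)
        = p ++ w ++ FreeGroup.invRev p := by
  intro gL
  induction gL with
  | nil =>
    intro _ vL hv _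
    refine ⟨vL, [], 0, (List.rotate_zero vL).symm, hv, List.nil_prefix, ?_⟩
    simp only [← FreeGroup.one_eq_mk, one_mul, inv_one, mul_one, FreeGroup.invRev_empty,
      List.append_nil, List.nil_append]
    exact toWord_mk_reduced hv.1
  | cons s rest ih =>
    intro hg vL hv hvne
    have hgrest : Reduced rest := hg.tail
    obtain ⟨w, p, n, hwrot, hwcyc, hp, hW⟩ := ih hgrest vL hv hvne
    have hwne : w ≠ [] := by
      rw [hwrot]
      simpa using hvne
    set inner := FreeGroup.mk rest * FreeGroup.mk vL * (FreeGroup.mk rest)⁻¹ with hinner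
    have hsplit : FreeGroup.mk (s :: rest) * FreeGroup.mk vL * (FreeGroup.mk (s :: rest))⁻¹
        = FreeGroup.mk [s] * inner * (FreeGroup.mk [s])⁻¹ := by
      rw [hinner, show FreeGroup.mk (s :: rest) = FreeGroup.mk [s] * FreeGroup.mk rest by
        rw [FreeGroup.mul_mk]; rfl]
      group
    rw [hsplit]
    have hinnereq : inner = FreeGroup.mk (p ++ w ++ FreeGroup.invRev p) := by
      rw [← hW, FreeGroup.mk_toWord]
    have hinnerred : Reduced (p ++ w ++ FreeGroup.invRev p) := by
      rw [← hW]; exact reduced_toWord inner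
    rcases p with _ | ⟨p0, ps⟩
    · -- p = [] : single letter conjugation of cyclically reduced w
      simp only [List.nil_append, FreeGroup.invRev_empty, List.append_nil] at hinnereq hW
      rcases hwc : w with _ | ⟨h, T⟩
      · exact absurd hwc hwne
      by_cases hcl : h = inv1 s
      · -- left cancellation
        have hx : FreeGroup.mk [s] * inner * (FreeGroup.mk [s])⁻¹
            = FreeGroup.mk (T ++ [h]) := by
          rw [hinnereq, hwc, show (h : Ltr) :: T = [h] ++ T from rfl, ← FreeGroup.mul_mk,
            FreeGroup.inv_mk, invRev_singleton, hcl,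
            show FreeGroup.mk [s] * (FreeGroup.mk [inv1 s] * FreeGroup.mk T) * FreeGroup.mk [inv1 s]
              = (FreeGroup.mk [s] * FreeGroup.mk [inv1 s]) * (FreeGroup.mk T * FreeGroup.mk [inv1 s]) by group,
            mk_cancel, one_mul, FreeGroup.mul_mk]
        have hrd : CycRed (T ++ [h]) := by
          rcases T with _ | ⟨t0, T'⟩
          · exact ⟨List.isChain_singleton h, by simpa using rd_self h⟩
          constructor
          · rw [Reduced, List.isChain_append]
            refine ⟨(hwc ▸ hwcyc.1).tail, List.isChain_singleton h, ?_⟩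
            intro x hx' y hy'
            simp only [List.head?_cons, Option.mem_some_iff] at hy'
            subst hy'
            have := hwcyc.2 h (by rw [hwc]; rfl) x
            apply this
            rw [hwc, List.getLast?_cons_cons]
            exact hx'
          · intro x hx' y hy'
            have hx'' : t0 = x := by
              rw [List.head?_append_of_ne_nil _ (by simp)] at hx'
              simpa using hx'
            have hy'' : h = y := by
              rw [List.getLast?_append_of_ne_nil _ (by simp)] at hy'
              simpa using hy'
            subst hx''; subst hy''
            exact (List.isChain_cons_cons.mp (hwc ▸ hwcyc.1)).1
        refine ⟨T ++ [h], [], n + 1, ?_, hrd, List.nil_prefix, ?_⟩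
        · rw [← List.rotate_rotate, ← hwrot, hwc, List.rotate_cons_succ, List.rotate_zero]
        · simp only [List.nil_append, FreeGroup.invRev_empty, List.append_nil]
          rw [hx]
          exact toWord_mk_reduced hrd.1
      · rcases List.eq_nil_or_concat w with hw0 | ⟨V, lw, hVlw⟩
        · exact absurd hw0 hwne
        have hVs : w = V ++ [lw] := by rw [hVlw]; simp
        by_cases hcr : lw = s
        · -- right cancellation
          have hx : FreeGroup.mk [s] * inner * (FreeGroup.mk [s])⁻¹
              = FreeGroup.mk (s :: V) := by
            rw [hinnereq, hVs, hcr, ← FreeGroup.mul_mk,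
              FreeGroup.inv_mk, invRev_singleton,
              show FreeGroup.mk [s] * (FreeGroup.mk V * FreeGroup.mk [s]) * FreeGroup.mk [inv1 s]
                = FreeGroup.mk [s] * FreeGroup.mk V * (FreeGroup.mk [s] * FreeGroup.mk [inv1 s]) by group,
              mk_cancel, mul_one, FreeGroup.mul_mk]
            rfl
          have hjunc : ∀ x ∈ V.getLast?, Rd x s := by
            intro x hx'
            have hch := hwcyc.1
            rw [hVs] at hch
            exact (List.isChain_append.mp hch).2.2 x hx' s
              (by simp [hcr])
          have hrd : CycRed (s :: V) := by
            rcases V with _ | ⟨v0, V'⟩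
            · exact ⟨List.isChain_singleton s, by simpa using rd_self s⟩
            have hv0 : v0 = h := by
              have := congrArg List.head? (hVs.symm.trans hwc)
              simpa using this
            constructor
            · rw [Reduced, List.isChain_cons_cons]
              constructor
              · rw [rd_iff', hv0]
                exact hcl
              · exact (hwcyc.1.prefix (by rw [hVs]; exact ⟨[lw], rfl⟩) : Reduced (v0 :: V'))
            · intro x hx' y hy'
              have hx'' : s = x := by simpa using hx'
              subst hx''
              rw [show s :: v0 :: V' = [s] ++ (v0 :: V') from rfl,
                List.getLast?_append_of_ne_nil _ (by simp)] at hy'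
              exact hjunc y hy'
          refine ⟨s :: V, [], n + V.length, ?_, hrd, List.nil_prefix, ?_⟩
          · rw [← List.rotate_rotate, ← hwrot, hVs, ← hcr, List.rotate_append_length_eq]
            rfl
          · simp only [List.nil_append, FreeGroup.invRev_empty, List.append_nil]
            rw [hx]
            exact toWord_mk_reduced hrd.1
        · -- no cancellation: p' = [s]
          have hx : FreeGroup.mk [s] * inner * (FreeGroup.mk [s])⁻¹
              = FreeGroup.mk ([s] ++ w ++ [inv1 s]) := by
            rw [hinnereq, FreeGroup.inv_mk, invRev_singleton, FreeGroup.mul_mk, FreeGroup.mul_mk]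
          have hrd3 : Reduced ([s] ++ w ++ [inv1 s]) := by
            rw [show ([s] ++ w ++ [inv1 s] : List Ltr) = s :: (w ++ [inv1 s]) by simp]
            rw [Reduced, List.isChain_cons]
            constructor
            · intro y hy'
              rw [List.head?_append_of_ne_nil _ (by rw[hwc]; simp), hwc] at hy'
              have hyh : h = y := by simpa using hy'
              subst hyh
              exact hcl
            · rw [List.isChain_append]
              refine ⟨hwcyc.1, List.isChain_singleton _, ?_⟩
              intro x hx' y hy'
              have hy'' : inv1 s = y := by simpa using hy'
              have hx'' : lw = x := by
                rw [hVs, List.getLast?_append_of_ne_nil _ (by simp)] at hx'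
                simpa using hx'
              subst hy''; subst hx''
              rw [rd_iff']
              intro hcon
              exact hcr (inv1_injective hcon).symm
          refine ⟨w, [s], n, hwrot, hwcyc, ⟨rest, rfl⟩, ?_⟩
          rw [hx, invRev_singleton, toWord_mk_reduced hrd3]
    · -- p = p0 :: ps nonempty
      obtain ⟨rtl, hrtl⟩ := hp
      have hsp0 : Rd s p0 := by
        have := (List.isChain_cons.mp hg).1
        apply this
        rw [← hrtl]
        rfl
      have hx : FreeGroup.mk [s] * inner * (FreeGroup.mk [s])⁻¹
          = FreeGroup.mk ([s] ++ ((p0 :: ps) ++ w ++ FreeGroup.invRev (p0 :: ps)) ++ [inv1 s]) := by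
        rw [hinnereq, FreeGroup.inv_mk, invRev_singleton, FreeGroup.mul_mk, FreeGroup.mul_mk]
      have hrd3 : Reduced ([s] ++ ((p0 :: ps) ++ w ++ FreeGroup.invRev (p0 :: ps)) ++ [inv1 s]) := by
        rw [show ([s] ++ ((p0 :: ps) ++ w ++ FreeGroup.invRev (p0 :: ps)) ++ [inv1 s] : List Ltr)
          = s :: (((p0 :: ps) ++ w ++ FreeGroup.invRev (p0 :: ps)) ++ [inv1 s]) by simp]
        rw [Reduced, List.isChain_cons]
        constructor
        · intro y hy'
          rw [List.head?_append_of_ne_nil _ (by simp), List.head?_append_of_ne_nil _ (by simp)] at hy'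
          have hyp : p0 = y := by simpa using hy'
          subst hyp
          exact hsp0
        · rw [List.isChain_append]
          refine ⟨hinnerred, List.isChain_singleton _, ?_⟩
          intro x hx' y hy'
          have hy'' : inv1 s = y := by simpa using hy'
          have hipne : FreeGroup.invRev (p0 :: ps) ≠ [] := by
            intro hcon
            have := congrArg List.length hcon
            rw [FreeGroup.invRev_length] at this
            simp at this
          have hx'' : inv1 p0 = x := by
            rw [List.getLast?_append_of_ne_nil _ hipne, getLast?_invRev] at hx'
            simpa using hx'
          subst hy''; subst hx''
          exact rd_symm hsp0
      refine ⟨w, s :: p0 :: ps, n, hwrot, hwcyc, ?_, ?_⟩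
      · exact ⟨rtl, by rw [← hrtl]; rfl⟩
      · rw [hx, toWord_mk_reduced hrd3]
        simp [invRev_cons]

lemma repL_succ_eq (n : ℕ) (L : List Ltr) : repL (n+1) L = L ++ repL n L := rfl

lemma repL_rotate_length (t : ℕ) (L : List Ltr) : (repL t L).rotate L.length = repL t L := by
  cases t with
  | zero => simp [repL]
  | succ t => rw [repL_succ_eq, List.rotate_append_length_eq, repL_comm]

lemma repL_append_comm (t : ℕ) (A B : List Ltr) :
    repL t (A ++ B) ++ A = A ++ repL t (B ++ A) := by
  induction t with
  | zero => simp [repL]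
  | succ t ih => simp only [repL_succ_eq, List.append_assoc, ih]

lemma repL_rotate_le_aux (t : ℕ) (A B : List Ltr) :
    (repL t (A ++ B)).rotate A.length = repL t (B ++ A) := by
  cases t with
  | zero => simp [repL]
  | succ t =>
    have h1 : repL (t+1) (A ++ B) = A ++ (B ++ repL t (A ++ B)) := by
      rw [repL_succ_eq]; simp [List.append_assoc]
    rw [h1, List.rotate_append_length_eq]
    have key := repL_append_comm t A B
    rw [repL_succ_eq, List.append_assoc, key]
    simp [List.append_assoc]

lemma repL_rotate_le (t : ℕ) (L : List Ltr) (r : ℕ) (hr : r ≤ L.length) :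
    (repL t L).rotate r = repL t (L.rotate r) := by
  have hlen : (L.take r).length = r := by rw [List.length_take]; omega
  calc (repL t L).rotate r
      = (repL t (L.take r ++ L.drop r)).rotate (L.take r).length := by
        rw [List.take_append_drop, hlen]
    _ = repL t (L.drop r ++ L.take r) := repL_rotate_le_aux t _ _
    _ = repL t (L.rotate r) := by rw [List.rotate_eq_drop_append_take hr]

lemma repL_rotate (t : ℕ) (L : List Ltr) (hL : L ≠ []) :
    ∀ n, ∃ Q : List Ltr, Q.length = L.length ∧ (repL t L).rotate n = repL t Q := by
  intro n
  induction n using Nat.strong_induction_on with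
  | _ n ih =>
  by_cases hn : n ≤ L.length
  · exact ⟨L.rotate n, by simp, repL_rotate_le t L n hn⟩
  · have hpos : 0 < L.length := List.length_pos_iff.mpr hL
    obtain ⟨m, rfl⟩ : ∃ m, n = L.length + m := ⟨n - L.length, by omega⟩
    rw [← List.rotate_rotate, repL_rotate_length]
    exact ih m (by omega)

lemma repL_getElem?_left (t : ℕ) (Q : List Ltr) (i : ℕ) (hi : i < Q.length) (ht : 1 ≤ t) :
    (repL t Q)[i]? = some Q[i] := by
  cases t with
  | zero => omega
  | succ t =>
    rw [repL_succ_eq, List.getElem?_append_left hi, List.getElem?_eq_getElem hi]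

lemma repL_getElem?_last (t : ℕ) (Q : List Ltr) (i : ℕ) (hi : i < Q.length) (ht : 1 ≤ t) :
    (repL t Q)[(t-1) * Q.length + i]? = some Q[i] := by
  cases t with
  | zero => omega
  | succ t =>
    rw [repL_succ',
      List.getElem?_append_right (by
        rw [repL_length, show t + 1 - 1 = t from rfl]
        exact Nat.le_add_right _ _)]
    rw [show t + 1 - 1 = t from rfl, repL_length,
      show t * Q.length + i - t * Q.length = i by omega, List.getElem?_eq_getElem hi]

lemma repL_getElem?_second (t : ℕ) (Q : List Ltr) (i : ℕ) (hi : i < Q.length) (ht : 2 ≤ t) :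
    (repL t Q)[Q.length + i]? = some Q[i] := by
  rcases t with _ | _ | t
  · omega
  · omega
  · rw [repL_succ_eq, List.getElem?_append_right (by omega),
      show Q.length + i - Q.length = i by omega]
    exact repL_getElem?_left (t+1) Q i hi (by omega)

lemma rd_of_fst_ne {x y : Ltr} (h : x.1 ≠ y.1) : Rd x y := by
  intro he
  exact h (congrArg Prod.fst he).symm

lemma reduced_replicate (n : ℕ) (x : Ltr) : Reduced (List.replicate n x) := by
  induction n with
  | zero => exact List.isChain_nil
  | succ n ih =>
    rw [List.replicate_succ, Reduced, List.isChain_cons]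
    refine ⟨?_, ih⟩
    intro y hy
    cases n with
    | zero => simp at hy
    | succ n =>
      rw [List.replicate_succ, List.head?_cons] at hy
      have : x = y := by simpa using hy
      subst this
      exact rd_self x

lemma head?_replicate_pos (n : ℕ) (hn : n ≠ 0) (x : Ltr) :
    (List.replicate n x).head? = some x := by
  cases n with
  | zero => omega
  | succ n => rw [List.replicate_succ, List.head?_cons]

lemma getLast?_replicate_pos (n : ℕ) (hn : n ≠ 0) (x : Ltr) :
    (List.replicate n x).getLast? = some x := by
  cases n with
  | zero => omega
  | succ n => rw [List.replicate_succ', List.getLast?_concat]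

lemma reduced_append {L₁ L₂ : List Ltr} (h₁ : Reduced L₁) (h₂ : Reduced L₂)
    (h : ∀ x ∈ L₁.getLast?, ∀ y ∈ L₂.head?, Rd x y) : Reduced (L₁ ++ L₂) :=
  List.isChain_append.mpr ⟨h₁, h₂, h⟩

lemma zpow_toWord (a : Bool) (m : ℤ) (hm : m ≠ 0) :
    toWord ((FreeGroup.of a : FreeGroup Bool) ^ m)
      = List.replicate m.natAbs (a, decide (0 < m)) := by
  rcases lt_trichotomy m 0 with h | h | h
  · have hm' : m = -(m.natAbs : ℤ) := by omega
    rw [hm', zpow_neg, zpow_natCast, FreeGroup.toWord_inv, FreeGroup.toWord_of_pow]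
    have : decide (0 < -(m.natAbs : ℤ)) = false := by
      rw [decide_eq_false_iff_not]
      omega
    rw [this]
    simp [FreeGroup.invRev, Int.natAbs_abs]
  · exact absurd h hm
  · have hm' : m = (m.natAbs : ℤ) := by omega
    rw [hm', zpow_natCast, FreeGroup.toWord_of_pow]
    have : decide (0 < (m.natAbs : ℤ)) = true := by
      rw [decide_eq_true_iff]
      omega
    rw [this]
    simp [Int.natAbs_abs]

lemma conj_pow_group (g c : FreeGroup Bool) (t : ℕ) : (g * c * g⁻¹) ^ t = g * c ^ t * g⁻¹ := by
  induction t with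
  | zero => simp
  | succ t ih => rw [pow_succ, pow_succ, ih]; group

end CWNPP

open CWNPP FreeGroup in
theorem commutator_like_word_not_proper_power
    (k l : ℤ) (hk : k ≠ 0) (hl : l ≠ 0) (hkl : k ≠ -l) :
    ¬ ∃ (x : FreeGroup Bool) (t : ℕ), 2 ≤ t ∧
        (FreeGroup.of false) ^ k * (FreeGroup.of true) ^ l *
          (FreeGroup.of false) ^ (-l) * (FreeGroup.of true) ^ (-k) = x ^ t := by
  rintro ⟨x, t, ht, heq⟩
  set K := k.natAbs with hK
  set Ln := l.natAbs with hLn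
  set sk := decide (0 < k) with hsk
  set sl := decide (0 < l) with hsl
  have hKpos : 0 < K := Int.natAbs_pos.mpr hk
  have hLpos : 0 < Ln := Int.natAbs_pos.mpr hl
  set A := List.replicate K ((false, sk) : Ltr) with hA
  set B := List.replicate Ln ((true, sl) : Ltr) with hB
  set C := List.replicate Ln ((false, !sl) : Ltr) with hC
  set D := List.replicate K ((true, !sk) : Ltr) with hD
  set W := A ++ (B ++ (C ++ D)) with hW
  set w := (FreeGroup.of false : FreeGroup Bool) ^ k * (FreeGroup.of true) ^ l *
      (FreeGroup.of false) ^ (-l) * (FreeGroup.of true) ^ (-k) with hw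
  -- the four factors as words
  have hdecneg : ∀ m : ℤ, m ≠ 0 → decide (0 < -m) = !decide (0 < m) := by
    intro m hm
    by_cases h : 0 < m
    · simp [h, show ¬ (0 < -m) by omega]; omega
    · simp [h, show 0 < -m by omega]; omega
  have hwa : (FreeGroup.of false : FreeGroup Bool) ^ k = FreeGroup.mk A := by
    rw [hA, hK, hsk]
    conv_lhs => rw [← FreeGroup.mk_toWord (x := (FreeGroup.of false : FreeGroup Bool) ^ k)]
    rw [zpow_toWord false k hk]
  have hwb : (FreeGroup.of true : FreeGroup Bool) ^ l = FreeGroup.mk B := by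
    rw [hB, hLn, hsl]
    conv_lhs => rw [← FreeGroup.mk_toWord (x := (FreeGroup.of true : FreeGroup Bool) ^ l)]
    rw [zpow_toWord true l hl]
  have hwc : (FreeGroup.of false : FreeGroup Bool) ^ (-l) = FreeGroup.mk C := by
    rw [hC, hLn, hsl]
    conv_lhs => rw [← FreeGroup.mk_toWord (x := (FreeGroup.of false : FreeGroup Bool) ^ (-l))]
    rw [zpow_toWord false (-l) (neg_ne_zero.mpr hl), Int.natAbs_neg, hdecneg l hl]
  have hwd : (FreeGroup.of true : FreeGroup Bool) ^ (-k) = FreeGroup.mk D := by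
    rw [hD, hK, hsk]
    conv_lhs => rw [← FreeGroup.mk_toWord (x := (FreeGroup.of true : FreeGroup Bool) ^ (-k))]
    rw [zpow_toWord true (-k) (neg_ne_zero.mpr hk), Int.natAbs_neg, hdecneg k hk]
  have hwW : w = FreeGroup.mk W := by
    rw [hw, hwa, hwb, hwc, hwd, FreeGroup.mul_mk, FreeGroup.mul_mk, FreeGroup.mul_mk, hW]
    congr 1
    simp [List.append_assoc]
  -- W is reduced and cyclically reduced
  have hAlast : A.getLast? = some (false, sk) := by
    rw [hA]; exact getLast?_replicate_pos K (by omega) _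
  have hBlast : B.getLast? = some (true, sl) := by
    rw [hB]; exact getLast?_replicate_pos Ln (by omega) _
  have hClast : C.getLast? = some (false, !sl) := by
    rw [hC]; exact getLast?_replicate_pos Ln (by omega) _
  have hDlast : D.getLast? = some (true, !sk) := by
    rw [hD]; exact getLast?_replicate_pos K (by omega) _
  have hAhead : A.head? = some (false, sk) := by
    rw [hA]; exact head?_replicate_pos K (by omega) _
  have hBhead : B.head? = some (true, sl) := by
    rw [hB]; exact head?_replicate_pos Ln (by omega) _
  have hChead : C.head? = some (false, !sl) := by
    rw [hC]; exact head?_replicate_pos Ln (by omega) _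
  have hDhead : D.head? = some (true, !sk) := by
    rw [hD]; exact head?_replicate_pos K (by omega) _
  have hBne : B ≠ [] := by rw [hB]; simp; omega
  have hCne : C ≠ [] := by rw [hC]; simp; omega
  have hDne : D ≠ [] := by rw [hD]; simp; omega
  have hAne : A ≠ [] := by rw [hA]; simp; omega
  have hCD : Reduced (C ++ D) := by
    refine reduced_append (hC ▸ reduced_replicate _ _) (hD ▸ reduced_replicate _ _) ?_
    intro x' hx' y' hy'
    rw [hClast] at hx'; rw [hDhead] at hy'
    have hx2 : (false, !sl) = x' := by simpa using hx'
    have hy2 : (true, !sk) = y' := by simpa using hy'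
    subst hx2; subst hy2
    exact rd_of_fst_ne (by simp)
  have hBCD : Reduced (B ++ (C ++ D)) := by
    refine reduced_append (hB ▸ reduced_replicate _ _) hCD ?_
    intro x' hx' y' hy'
    rw [hBlast] at hx'
    rw [List.head?_append_of_ne_nil _ hCne, hChead] at hy'
    have hx2 : (true, sl) = x' := by simpa using hx'
    have hy2 : (false, !sl) = y' := by simpa using hy'
    subst hx2; subst hy2
    exact rd_of_fst_ne (by simp)
  have hWred : Reduced W := by
    rw [hW]
    refine reduced_append (hA ▸ reduced_replicate _ _) hBCD ?_
    intro x' hx' y' hy'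
    rw [hAlast] at hx'
    rw [List.head?_append_of_ne_nil _ hBne, hBhead] at hy'
    have hx2 : (false, sk) = x' := by simpa using hx'
    have hy2 : (true, sl) = y' := by simpa using hy'
    subst hx2; subst hy2
    exact rd_of_fst_ne (by simp)
  have hWhead : W.head? = some (false, sk) := by
    rw [hW, List.head?_append_of_ne_nil _ hAne, hAhead]
  have hWlast : W.getLast? = some (true, !sk) := by
    rw [hW, List.getLast?_append_of_ne_nil _ (by simp [hBne, hCne, hDne]),
      List.getLast?_append_of_ne_nil _ (by simp [hCne, hDne]),
      List.getLast?_append_of_ne_nil _ hDne, hDlast]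
  have hWcyc : CycRed W := by
    refine ⟨hWred, ?_⟩
    intro x' hx' y' hy'
    rw [hWhead] at hx'; rw [hWlast] at hy'
    have hx2 : (false, sk) = x' := by simpa using hx'
    have hy2 : (true, !sk) = y' := by simpa using hy'
    subst hx2; subst hy2
    exact rd_of_fst_ne (by simp)
  have htW : toWord w = W := by rw [hwW]; exact toWord_mk_reduced hWred
  have hNval : W.length = K + (Ln + (Ln + K)) := by
    rw [hW, hA, hB, hC, hD]; simp
  -- x is nontrivial
  have hx1 : x ≠ 1 := by
    rintro rfl
    rw [one_pow] at heq
    have hWnil : W = [] := by rw [← htW, heq, FreeGroup.toWord_one]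
    have := congrArg List.length hWnil
    rw [hNval] at this
    simp at this
    omega
  obtain ⟨g, c, hxg, hc1, hccyc⟩ := exists_cycred x hx1
  have hvne : toWord c ≠ [] := fun hh => hc1 (FreeGroup.toWord_eq_nil_iff.mp hh)
  have hvpos : 0 < (toWord c).length := List.length_pos_iff.mpr hvne
  have heq2 : w = g * c ^ t * g⁻¹ := by rw [heq, hxg, conj_pow_group]
  have hct : toWord (c ^ t) = repL t (toWord c) := toWord_pow hccyc t
  have hctcyc : CycRed (repL t (toWord c)) := cycRed_repL hccyc t hvne (by omega)
  have hctne : repL t (toWord c) ≠ [] := by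
    intro hcon
    have := congrArg List.length hcon
    rw [repL_length] at this
    simp only [List.length_nil] at this
    rcases Nat.mul_eq_zero.mp this with h' | h' <;> omega
  obtain ⟨wr, p, n, hrot, hwrcyc, hp, hWeq⟩ :=
    conj_struct (toWord g) (reduced_toWord g) _ hctcyc hctne
  have helt : FreeGroup.mk (toWord g) * FreeGroup.mk (repL t (toWord c))
      * (FreeGroup.mk (toWord g))⁻¹ = w := by
    rw [FreeGroup.mk_toWord, ← hct, FreeGroup.mk_toWord, ← heq2]
  rw [helt, htW] at hWeq
  -- p must be empty since W is cyclically reduced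
  rcases p with _ | ⟨p0, ps⟩
  swap
  · exfalso
    have hipne : invRev (p0 :: ps) ≠ [] := by
      intro hcon
      have := congrArg List.length hcon
      rw [FreeGroup.invRev_length] at this
      simp at this
    have hWhead' : W.head? = some p0 := by
      rw [hWeq, List.head?_append_of_ne_nil _ (by simp), List.head?_append_of_ne_nil _ (by simp)]
      rfl
    have hWlast' : W.getLast? = some (inv1 p0) := by
      rw [hWeq, List.getLast?_append_of_ne_nil _ hipne, getLast?_invRev]
      rfl
    have := hWcyc.2 p0 (by rw [hWhead']; rfl) (inv1 p0) (by rw [hWlast']; rfl)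
    exact this (by rw [inv1_inv1])
  simp only [List.nil_append, FreeGroup.invRev_empty, List.append_nil] at hWeq
  -- W is a t-th power of a word Q
  obtain ⟨Q, hQlen, hQrot⟩ := repL_rotate t (toWord c) hvne n
  have hWQ : W = repL t Q := by rw [hWeq, hrot, hQrot]
  have hdpos : 0 < Q.length := by rw [hQlen]; exact hvpos
  set d := Q.length with hd
  have hNW : W.length = t * d := by rw [hWQ, repL_length]
  have h2d : 2 * d ≤ t * d := Nat.mul_le_mul_right d ht
  -- characterization of W's letters
  have hWval : ∀ i, i < W.length → W[i]? =
      some (if i < K then ((false, sk) : Ltr) else if i < K + Ln then (true, sl)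
        else if i < K + Ln + Ln then (false, !sl) else (true, !sk)) := by
    intro i hi
    rw [hNval] at hi
    rw [hW]
    by_cases h1 : i < K
    · rw [List.getElem?_append_left (by rw [hA]; simpa using h1), hA,
        List.getElem?_replicate_of_lt h1]
      simp [h1]
    · rw [List.getElem?_append_right (by rw [hA]; simp; omega), hA, List.length_replicate]
      by_cases h2 : i < K + Ln
      · rw [List.getElem?_append_left (by rw [hB]; simp; omega), hB,
          List.getElem?_replicate_of_lt (by omega)]
        simp [h1, h2]
      · rw [List.getElem?_append_right (by rw [hB]; simp; omega), hB, List.length_replicate]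
        by_cases h3 : i < K + Ln + Ln
        · rw [List.getElem?_append_left (by rw [hC]; simp; omega), hC,
            List.getElem?_replicate_of_lt (by omega)]
          simp [h1, h2, h3]
        · rw [List.getElem?_append_right (by rw [hC]; simp; omega), hC, List.length_replicate,
            hD, List.getElem?_replicate_of_lt (by omega)]
          simp [h1, h2, h3]
  have hmul : (t - 1) * d + d = t * d := by
    cases t with
    | zero => omega
    | succ t => rw [Nat.succ_sub_one, Nat.succ_mul]
  have hdlt : d < W.length := by omega
  have hd1Q : d - 1 < Q.length := by omega
  -- key positions
  have hW0 : W[(0 : ℕ)]? = some (Q[0]'hdpos) := by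
    rw [hWQ]; exact repL_getElem?_left t Q 0 hdpos (by omega)
  have hWd : W[d]? = some (Q[0]'hdpos) := by
    rw [hWQ]
    have := repL_getElem?_second t Q 0 hdpos ht
    simpa using this
  have hWd1 : W[d - 1]? = some (Q[d-1]'hd1Q) := by
    rw [hWQ]; exact repL_getElem?_left t Q (d-1) (by omega) (by omega)
  have hWN1 : W[W.length - 1]? = some (Q[d-1]'hd1Q) := by
    rw [hWQ]
    have h5 := repL_getElem?_last t Q (d-1) (by omega) (by omega)
    rw [show (t-1) * Q.length + (d - 1) = (repL t Q).length - 1 by rw [repL_length, ← hd]; omega] at h5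
    exact h5
  -- value of Q[0]
  have hQ0 : Q[0]'hdpos = ((false, sk) : Ltr) := by
    have h1 := hWval 0 (by omega)
    rw [if_pos hKpos] at h1
    exact Option.some.inj (hW0.symm.trans h1)
  -- value of Q[d-1]
  have hQd1 : Q[d-1]'hd1Q = ((true, !sk) : Ltr) := by
    have h1 := hWval (W.length - 1) (by omega)
    rw [if_neg (by omega), if_neg (by omega), if_neg (by omega)] at h1
    exact Option.some.inj (hWN1.symm.trans h1)
  -- d = K + Ln from the junction
  have hdval : (if d < K then ((false, sk) : Ltr) else if d < K + Ln then (true, sl)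
      else if d < K + Ln + Ln then (false, !sl) else (true, !sk)) = (false, sk) := by
    have h1 := hWval d hdlt
    rw [hWd] at h1
    rw [hQ0] at h1
    exact (Option.some.inj h1).symm
  have hd1val : (if d - 1 < K then ((false, sk) : Ltr) else if d - 1 < K + Ln then (true, sl)
      else if d - 1 < K + Ln + Ln then (false, !sl) else (true, !sk)) = (true, !sk) := by
    have h1 := hWval (d - 1) (by omega)
    rw [hWd1] at h1
    rw [hQd1] at h1
    exact (Option.some.inj h1).symm
  have hdcase : d < K ∨ (¬ d < K ∧ ¬ d < K + Ln ∧ d < K + Ln + Ln) := by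
    by_cases h1 : d < K
    · exact Or.inl h1
    right
    by_cases h2 : d < K + Ln
    · exfalso
      rw [if_neg h1, if_pos h2] at hdval
      simpa using congrArg Prod.fst hdval
    by_cases h3 : d < K + Ln + Ln
    · exact ⟨h1, h2, h3⟩
    · exfalso
      rw [if_neg h1, if_neg h2, if_neg h3] at hdval
      simpa using congrArg Prod.fst hdval
  have hd1case : (¬ d - 1 < K ∧ d - 1 < K + Ln) ∨ ¬ d - 1 < K + Ln + Ln := by
    by_cases h1 : d - 1 < K
    · exfalso
      rw [if_pos h1] at hd1val
      simpa using congrArg Prod.fst hd1val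
    by_cases h2 : d - 1 < K + Ln
    · exact Or.inl ⟨h1, h2⟩
    by_cases h3 : d - 1 < K + Ln + Ln
    · exfalso
      rw [if_neg h1, if_neg h2, if_pos h3] at hd1val
      simpa using congrArg Prod.fst hd1val
    · exact Or.inr h3
  have hdKL : d = K + Ln := by omega
  have ht2 : t = 2 := Nat.eq_of_mul_eq_mul_right hdpos (by omega)
  subst ht2
  -- periodicity at positions Ln and K
  have hLQ : Ln < Q.length := by omega
  have hKQ : K < Q.length := by omega
  have hWL : W[Ln]? = some (Q[Ln]'hLQ) := by
    rw [hWQ]; exact repL_getElem?_left 2 Q Ln hLQ (by omega)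
  have hWdL : W[d + Ln]? = some (Q[Ln]'hLQ) := by
    rw [hWQ]; exact repL_getElem?_second 2 Q Ln hLQ le_rfl
  have hWK : W[K]? = some (Q[K]'hKQ) := by
    rw [hWQ]; exact repL_getElem?_left 2 Q K hKQ (by omega)
  have hWdK : W[d + K]? = some (Q[K]'hKQ) := by
    rw [hWQ]; exact repL_getElem?_second 2 Q K hKQ le_rfl
  -- W[d + Ln] is in block D
  have hvdL : (if d + Ln < K then ((false, sk) : Ltr) else if d + Ln < K + Ln then (true, sl)
      else if d + Ln < K + Ln + Ln then (false, !sl) else (true, !sk))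
      = (if Ln < K then ((false, sk) : Ltr) else if Ln < K + Ln then (true, sl)
        else if Ln < K + Ln + Ln then (false, !sl) else (true, !sk)) := by
    have h1 := hWval (d + Ln) (by omega)
    have h2 := hWval Ln (by omega)
    rw [hWdL] at h1
    rw [hWL] at h2
    exact (Option.some.inj h1).symm.trans (Option.some.inj h2)
  have hvdK : (if d + K < K then ((false, sk) : Ltr) else if d + K < K + Ln then (true, sl)
      else if d + K < K + Ln + Ln then (false, !sl) else (true, !sk))
      = (if K < K then ((false, sk) : Ltr) else if K < K + Ln then (true, sl)
        else if K < K + Ln + Ln then (false, !sl) else (true, !sk)) := by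
    have h1 := hWval (d + K) (by omega)
    have h2 := hWval K (by omega)
    rw [hWdK] at h1
    rw [hWK] at h2
    exact (Option.some.inj h1).symm.trans (Option.some.inj h2)
  -- derive K = Ln and sl = !sk
  rw [if_neg (by omega), if_neg (by omega), if_neg (by omega)] at hvdL
  -- LHS of hvdL is (true, !sk)
  have hLK : ¬ Ln < K := by
    intro hcon
    rw [if_pos hcon] at hvdL
    simpa using congrArg Prod.fst hvdL
  rw [if_neg hLK, if_pos (by omega)] at hvdL
  have hslval : sl = !sk := by
    have := congrArg Prod.snd hvdL
    simpa using this.symm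
  have hKL2 : ¬ K < Ln := by
    intro hcon
    rw [if_neg (by omega), if_neg (by omega), if_pos (by omega)] at hvdK
    rw [if_neg (by omega), if_pos (by omega)] at hvdK
    simpa using congrArg Prod.fst hvdK
  -- now K = Ln, sl = !sk : contradiction with k ≠ -l
  have hnat : k.natAbs = l.natAbs := by omega
  have hiff : (0 < l) ↔ ¬ (0 < k) := by
    rw [hsl, hsk, ← decide_not] at hslval
    exact decide_eq_decide.mp hslval
  by_cases hkp : 0 < k
  · have h5 : ¬ 0 < l := fun h6 => (hiff.mp h6) hkp
    omega
  · have h5 : 0 < l := hiff.mpr hkp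
    omega
end

section
/- Let k, l be non-zero integers with k ≠ −l and let G = ⟨a, b | a^k b^l = b^k a^l⟩ be the corresponding two-generator one-relator group. Then with X = {a, b}, the set X^{·k} X^{·l} = {a^{k+l}, a^k b^l, b^{k+l}} has cardinality exactly 3. -/
/-- The single relation `a^k b^l (b^k a^l)⁻¹` in the free group on two
generators (`false` plays the role of `a`, `true` of `b`). -/
def dilateRels (k l : ℤ) : Set (FreeGroup Bool) :=
  {(FreeGroup.of false) ^ k * (FreeGroup.of true) ^ l *
    ((FreeGroup.of true) ^ k * (FreeGroup.of false) ^ l)⁻¹}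

open Polynomial in

lemma exists_good_root (e f : ℤ) (he : e ≠ 0) (hf : f ≠ 0) (hef : e ≠ f) (h2f : e ≠ 2*f) :
    ∃ u : ℂ, u ≠ 0 ∧ u ^ e = 2 * u ^ f - 1 ∧ u ^ f ≠ 1 := by
  set d : ℕ := Int.gcd e f with hd
  have hdpos : 0 < d := Int.gcd_pos_of_ne_zero_left _ he
  have hde : (d:ℤ) ∣ e := Int.gcd_dvd_left e f
  have hdf : (d:ℤ) ∣ f := Int.gcd_dvd_right e f
  set t : ℤ := min 0 (min e f) with htdef
  have hte : t ≤ e := le_trans (min_le_right _ _) (min_le_left _ _)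
  have htf : t ≤ f := le_trans (min_le_right _ _) (min_le_right _ _)
  have ht0 : t ≤ 0 := min_le_left _ _
  have htm : t = 0 ∨ t = e ∨ t = f := by
    rcases min_cases 0 (min e f) with ⟨h1, _⟩ | ⟨h1, _⟩
    · left; exact h1
    · rcases min_cases e f with ⟨h2, _⟩ | ⟨h2, _⟩
      · right; left; rw [htdef, h1, h2]
      · right; right; rw [htdef, h1, h2]
  have hdt : (d:ℤ) ∣ t := by rcases htm with h | h | h <;> rw [h] <;> simp [hde, hdf]
  obtain ⟨A', hA'⟩ : (d:ℤ) ∣ (e - t) := dvd_sub hde hdt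
  obtain ⟨B', hB'⟩ : (d:ℤ) ∣ (f - t) := dvd_sub hdf hdt
  obtain ⟨C', hC'⟩ : (d:ℤ) ∣ (-t) := (dvd_neg).mpr hdt
  have hdz : (0:ℤ) < (d:ℤ) := by exact_mod_cast hdpos
  have hA'0 : 0 ≤ A' := by nlinarith
  have hB'0 : 0 ≤ B' := by nlinarith
  have hC'0 : 0 ≤ C' := by nlinarith
  set A : ℕ := A'.toNat with hA
  set B : ℕ := B'.toNat with hB
  set C3 : ℕ := C'.toNat with hC
  have hAZ : (A:ℤ) = A' := Int.toNat_of_nonneg hA'0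
  have hBZ : (B:ℤ) = B' := Int.toNat_of_nonneg hB'0
  have hCZ : (C3:ℤ) = C' := Int.toNat_of_nonneg hC'0
  have hAB : A ≠ B := by
    intro h
    have : A' = B' := by rw [← hAZ, ← hBZ, h]
    apply hef; nlinarith [this]
  have hAC : A ≠ C3 := by
    intro h
    have : A' = C' := by rw [← hAZ, ← hCZ, h]
    apply he; nlinarith [this]
  have hBC : B ≠ C3 := by
    intro h
    have : B' = C' := by rw [← hBZ, ← hCZ, h]
    apply hf; nlinarith [this]
  have hsum : A' - 2*B' + C' ≠ 0 := by
    intro h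
    apply h2f; nlinarith [h]
  -- the polynomial R
  set R : Polynomial ℂ := X ^ A - Polynomial.C 2 * X ^ B + X ^ C3 with hR
  have hR1 : R.eval 1 = 0 := by simp [hR]; ring
  obtain ⟨S, hS⟩ : (X - Polynomial.C (1:ℂ)) ∣ R := dvd_iff_isRoot.mpr hR1
  have hm : ∃ m : ℕ, 2 ≤ m ∧ R.coeff m ≠ 0 := by
    have h2 : 2 ≤ A ∨ 2 ≤ B ∨ 2 ≤ C3 := by omega
    rcases h2 with h | h | h
    · exact ⟨A, h, by simp [hR, coeff_X_pow, hAB, hAC, hBC, Ne.symm hAB, Ne.symm hAC, Ne.symm hBC]⟩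
    · exact ⟨B, h, by simp [hR, coeff_X_pow, hAB, hAC, hBC, Ne.symm hAB, Ne.symm hAC, Ne.symm hBC]⟩
    · exact ⟨C3, h, by simp [hR, coeff_X_pow, hAB, hAC, hBC, Ne.symm hAB, Ne.symm hAC, Ne.symm hBC]⟩
  obtain ⟨m, hm2, hcoeff⟩ := hm
  have hRne : R ≠ 0 := fun h => hcoeff (by simp [h])
  have hSne : S ≠ 0 := by
    intro h
    rw [h, mul_zero] at hS
    exact hRne hS
  have hdegR : 2 ≤ R.natDegree := le_trans hm2 (le_natDegree_of_ne_zero hcoeff)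
  have hdegS : 1 ≤ S.natDegree := by
    have := natDegree_mul (X_sub_C_ne_zero 1) hSne
    rw [← hS, natDegree_X_sub_C] at this
    omega
  have hdegS' : 0 < S.degree := natDegree_pos_iff_degree_pos.mp hdegS
  obtain ⟨y, hy⟩ := IsAlgClosed.exists_root S (ne_of_gt hdegS')
  have hy' : S.eval y = 0 := hy
  have hS1 : S.eval 1 ≠ 0 := by
    have hd2 : (derivative R).eval 1 = S.eval 1 := by
      rw [hS, derivative_mul]
      simp
    have hd1 : (derivative R).eval 1 = (A:ℂ) - 2*(B:ℂ) + (C3:ℂ) := by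
      rw [hR]
      simp [derivative_X_pow]
      try ring
    intro h
    rw [h] at hd2
    rw [hd1] at hd2
    apply hsum
    have : ((A' - 2*B' + C' : ℤ) : ℂ) = 0 := by
      push_cast
      rw [← hAZ, ← hBZ, ← hCZ]
      push_cast
      linear_combination hd2
    exact_mod_cast this
  have hy1 : y ≠ 1 := fun h => hS1 (h ▸ hy')
  have hR0 : R.eval 0 ≠ 0 := by
    have hone : A = 0 ∨ B = 0 ∨ C3 = 0 := by
      rcases htm with h | h | h
      · right; right
        have h0 : (d:ℤ) * C' = 0 := by rw [← hC', h]; ring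
        have : C' = 0 := by
          rcases mul_eq_zero.mp h0 with h1 | h1
          · exact absurd h1 (by exact_mod_cast hdpos.ne')
          · exact h1
        omega
      · left
        have h0 : (d:ℤ) * A' = 0 := by rw [← hA', h]; ring
        have : A' = 0 := by
          rcases mul_eq_zero.mp h0 with h1 | h1
          · exact absurd h1 (by exact_mod_cast hdpos.ne')
          · exact h1
        omega
      · right; left
        have h0 : (d:ℤ) * B' = 0 := by rw [← hB', h]; ring
        have : B' = 0 := by
          rcases mul_eq_zero.mp h0 with h1 | h1
          · exact absurd h1 (by exact_mod_cast hdpos.ne')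
          · exact h1
        omega
    rcases hone with h | h | h
    · have hB0 : B ≠ 0 := by omega
      have hC0 : C3 ≠ 0 := by omega
      simp [hR, h, zero_pow hB0, zero_pow hC0]
    · have hA0 : A ≠ 0 := by omega
      have hC0 : C3 ≠ 0 := by omega
      simp [hR, h, zero_pow hA0, zero_pow hC0]
    · have hA0 : A ≠ 0 := by omega
      have hB0 : B ≠ 0 := by omega
      simp [hR, h, zero_pow hA0, zero_pow hB0]
  have hy0 : y ≠ 0 := by
    intro h
    subst h
    apply hR0
    rw [hS, eval_mul, hy', mul_zero]
  obtain ⟨u, hu⟩ := IsAlgClosed.exists_pow_nat_eq y hdpos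
  have hu0 : u ≠ 0 := by
    intro h
    apply hy0
    rw [← hu, h, zero_pow hdpos.ne']
  have hRy : y ^ A - 2*y^B + y^C3 = 0 := by
    have : R.eval y = 0 := by rw [hS]; simp [hy']
    simpa [hR] using this
  have h1 : u ^ (e - t) = y ^ A := by
    rw [hA', zpow_mul, zpow_natCast, hu, ← hAZ, zpow_natCast]
  have h2 : u ^ (f - t) = y ^ B := by
    rw [hB', zpow_mul, zpow_natCast, hu, ← hBZ, zpow_natCast]
  have h3 : u ^ (-t) = y ^ C3 := by
    rw [hC', zpow_mul, zpow_natCast, hu, ← hCZ, zpow_natCast]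
  have main : u ^ e = 2 * u ^ f - 1 := by
    have he1 : u ^ e = u ^ t * u ^ (e - t) := by rw [← zpow_add₀ hu0]; ring_nf
    have he2 : u ^ f = u ^ t * u ^ (f - t) := by rw [← zpow_add₀ hu0]; ring_nf
    have he3 : (1:ℂ) = u ^ t * u ^ (-t) := by rw [← zpow_add₀ hu0]; simp
    rw [he1, he2, he3, h1, h2, h3]
    linear_combination (u^t) * hRy
  refine ⟨u, hu0, main, ?_⟩
  intro hf1
  have hfe : u ^ e = 1 := by rw [main, hf1]; ring
  apply hy1
  rw [← hu, ← zpow_natCast u d]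
  have hdab : ((d:ℕ):ℤ) = e * Int.gcdA e f + f * Int.gcdB e f := Int.gcd_eq_gcd_ab e f
  rw [hdab, zpow_add₀ hu0, zpow_mul, zpow_mul, hfe, hf1]
  simp

noncomputable section

abbrev M2 := Matrix (Fin 2) (Fin 2) ℂ

lemma fin_two_eq {α : Type*} {a b c d a' b' c' d' : α} (h1 : a = a') (h2 : b = b')
    (h3 : c = c') (h4 : d = d') : !![a, b; c, d] = !![a', b'; c', d'] := by
  subst h1 h2 h3 h4; rfl

noncomputable def affU (u : ℂ) (hu : u ≠ 0) (w : ℂ) : (M2)ˣ where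
  val := !![u, w; 0, 1]
  inv := !![u⁻¹, -(w * u⁻¹); 0, 1]
  val_inv := by
    rw [Matrix.mul_fin_two, Matrix.one_fin_two]
    exact fin_two_eq (by field_simp; ring) (by field_simp; ring) (by ring) (by ring)
  inv_val := by
    rw [Matrix.mul_fin_two, Matrix.one_fin_two]
    exact fin_two_eq (by field_simp; ring) (by field_simp; ring) (by ring) (by ring)

lemma affU_zpow (u : ℂ) (hu : u ≠ 0) (hu1 : u ≠ 1) (w : ℂ) (n : ℤ) :
    ((affU u hu w) ^ n).val = !![u ^ n, w * ((u ^ n - 1)/(u - 1)); 0, 1] := by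
  have hu1' : u - 1 ≠ 0 := sub_ne_zero.mpr hu1
  induction n using Int.induction_on with
  | zero => simp [zpow_zero, Matrix.one_fin_two]
  | succ n ih =>
      rw [zpow_add_one, Units.val_mul, ih]
      show _ = !![u ^ ((n:ℤ)+1), w * ((u ^ ((n:ℤ)+1) - 1)/(u - 1)); 0, 1]
      rw [affU, Matrix.mul_fin_two, zpow_add_one₀ hu]
      exact fin_two_eq (by ring) (by field_simp; ring) (by ring) (by ring)
  | pred n ih =>
      rw [zpow_sub_one, Units.val_mul, ih]
      show _ = !![u ^ (-(n:ℤ)-1), w * ((u ^ (-(n:ℤ)-1) - 1)/(u - 1)); 0, 1]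
      have hinv : (affU u hu w)⁻¹.val = !![u⁻¹, -(w * u⁻¹); 0, 1] := rfl
      rw [hinv, Matrix.mul_fin_two, zpow_sub_one₀ hu]
      exact fin_two_eq (by ring) (by field_simp; ring) (by ring) (by ring)

lemma rel_holds (k l : ℤ) (u : ℂ) (hu : u ≠ 0) (hu1 : u ≠ 1)
    (hrel : u ^ (k + l) = 2 * u ^ k - 1) :
    ∀ r ∈ dilateRels k l,
      (FreeGroup.lift (fun x : Bool => if x then affU u hu 0 else affU u hu 1)) r = 1 := by
  have hu1' : u - 1 ≠ 0 := sub_ne_zero.mpr hu1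
  have hkl : u ^ k * u ^ l = 2 * u ^ k - 1 := by rw [← zpow_add₀ hu]; exact hrel
  rintro r hr
  rw [dilateRels, Set.mem_singleton_iff] at hr
  subst hr
  simp only [map_mul, map_inv, map_zpow, FreeGroup.lift_apply_of, if_true, if_false,
    Bool.false_eq_true]
  rw [mul_inv_eq_one]
  apply Units.ext
  rw [Units.val_mul, Units.val_mul, affU_zpow u hu hu1, affU_zpow u hu hu1,
    affU_zpow u hu hu1, affU_zpow u hu hu1, Matrix.mul_fin_two, Matrix.mul_fin_two]
  apply fin_two_eq
  · ring
  · field_simp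
    linear_combination -hkl
  · ring
  · ring

lemma entry01 {a b c d a' b' c' d' : ℂ} (h : !![a, b; c, d] = !![a', b'; c', d']) : b = b' := by
  have := congrFun (congrFun h 0) 1
  simpa using this

lemma distincts_ne (k l : ℤ) (u : ℂ) (hu : u ≠ 0) (hu1 : u ≠ 1)
    (hrel : u ^ (k + l) = 2 * u ^ k - 1) (hk1 : u ^ k ≠ 1) (hl1 : u ^ l ≠ 1)
    (hkl1 : u ^ (k + l) ≠ 1) :
    ((PresentedGroup.of false : PresentedGroup (dilateRels k l)) ^ (k+l)
        ≠ PresentedGroup.of false ^ k * PresentedGroup.of true ^ l) ∧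
    ((PresentedGroup.of false : PresentedGroup (dilateRels k l)) ^ (k+l)
        ≠ PresentedGroup.of true ^ (k+l)) ∧
    ((PresentedGroup.of false : PresentedGroup (dilateRels k l)) ^ k
        * PresentedGroup.of true ^ l ≠ PresentedGroup.of true ^ (k+l)) := by
  have hu1' : u - 1 ≠ 0 := sub_ne_zero.mpr hu1
  set φ := PresentedGroup.toGroup (rel_holds k l u hu hu1 hrel) with hφ
  have hfa : φ (PresentedGroup.of false) = affU u hu 1 := PresentedGroup.toGroup.of _
  have hfb : φ (PresentedGroup.of true) = affU u hu 0 := PresentedGroup.toGroup.of _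
  refine ⟨?_, ?_, ?_⟩
  · intro h
    have h2 := congrArg φ h
    rw [map_zpow, map_mul, map_zpow, map_zpow, hfa, hfb] at h2
    have h3 := congrArg Units.val h2
    rw [Units.val_mul, affU_zpow u hu hu1, affU_zpow u hu hu1, affU_zpow u hu hu1,
      Matrix.mul_fin_two] at h3
    have h4 := entry01 h3
    apply hl1
    have h5 : u ^ (k+l) = u ^ k := by
      field_simp at h4
      linear_combination h4
    have h6 : u ^ k * u ^ l = u ^ k * 1 := by
      rw [mul_one, ← zpow_add₀ hu]; exact h5
    exact mul_left_cancel₀ (zpow_ne_zero _ hu) h6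
  · intro h
    have h2 := congrArg φ h
    rw [map_zpow, map_zpow, hfa, hfb] at h2
    have h3 := congrArg Units.val h2
    rw [affU_zpow u hu hu1, affU_zpow u hu hu1] at h3
    have h4 := entry01 h3
    apply hkl1
    field_simp at h4
    exact absurd h4 one_ne_zero
  · intro h
    have h2 := congrArg φ h
    rw [map_mul, map_zpow, map_zpow, map_zpow, hfa, hfb] at h2
    have h3 := congrArg Units.val h2
    rw [Units.val_mul, affU_zpow u hu hu1, affU_zpow u hu hu1, affU_zpow u hu hu1,
      Matrix.mul_fin_two] at h3
    have h4 := entry01 h3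
    apply hk1
    field_simp at h4
    linear_combination h4

lemma rel_holds_ab (k l : ℤ) (hkleq : k = l) :
    ∀ r ∈ dilateRels k l,
      (FreeGroup.lift (fun x : Bool =>
        Multiplicative.ofAdd (if x then ((0:ℤ),(1:ℤ)) else (1,0)))) r = 1 := by
  rintro r hr
  rw [dilateRels, Set.mem_singleton_iff] at hr
  subst hr
  simp only [map_mul, map_inv, map_zpow, FreeGroup.lift_apply_of, if_true, if_false,
    Bool.false_eq_true]
  rw [← ofAdd_zsmul, ← ofAdd_zsmul, ← ofAdd_zsmul, ← ofAdd_zsmul, ← ofAdd_add,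
    ← ofAdd_add, ← ofAdd_neg, ← ofAdd_add]
  rw [show (1:Multiplicative (ℤ×ℤ)) = Multiplicative.ofAdd 0 from rfl]
  congr 1
  rw [Prod.ext_iff]
  constructor <;> simp [Prod.smul_mk, hkleq] <;> ring

lemma distincts_ne_ab (k l : ℤ) (hk : k ≠ 0) (hl : l ≠ 0) (hkl : k ≠ -l) (hkleq : k = l) :
    ((PresentedGroup.of false : PresentedGroup (dilateRels k l)) ^ (k+l)
        ≠ PresentedGroup.of false ^ k * PresentedGroup.of true ^ l) ∧
    ((PresentedGroup.of false : PresentedGroup (dilateRels k l)) ^ (k+l)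
        ≠ PresentedGroup.of true ^ (k+l)) ∧
    ((PresentedGroup.of false : PresentedGroup (dilateRels k l)) ^ k
        * PresentedGroup.of true ^ l ≠ PresentedGroup.of true ^ (k+l)) := by
  set φ := PresentedGroup.toGroup (rel_holds_ab k l hkleq) with hφ
  have hfa : φ (PresentedGroup.of false) = Multiplicative.ofAdd ((1:ℤ),(0:ℤ)) :=
    PresentedGroup.toGroup.of _
  have hfb : φ (PresentedGroup.of true) = Multiplicative.ofAdd ((0:ℤ),(1:ℤ)) :=
    PresentedGroup.toGroup.of _
  refine ⟨?_, ?_, ?_⟩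
  · intro h
    have h2 := congrArg (Multiplicative.toAdd ∘ φ) h
    simp only [Function.comp_apply, map_zpow, map_mul, hfa, hfb, toAdd_zpow, toAdd_mul,
      toAdd_ofAdd, Prod.smul_mk, smul_eq_mul, Prod.mk_add_mk, Prod.mk.injEq] at h2
    omega
  · intro h
    have h2 := congrArg (Multiplicative.toAdd ∘ φ) h
    simp only [Function.comp_apply, map_zpow, map_mul, hfa, hfb, toAdd_zpow, toAdd_mul,
      toAdd_ofAdd, Prod.smul_mk, smul_eq_mul, Prod.mk_add_mk, Prod.mk.injEq] at h2
    omega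
  · intro h
    have h2 := congrArg (Multiplicative.toAdd ∘ φ) h
    simp only [Function.comp_apply, map_zpow, map_mul, hfa, hfb, toAdd_zpow, toAdd_mul,
      toAdd_ofAdd, Prod.smul_mk, smul_eq_mul, Prod.mk_add_mk, Prod.mk.injEq] at h2
    omega

lemma key_distinct (k l : ℤ) (hk : k ≠ 0) (hl : l ≠ 0) (hkl : k ≠ -l) :
    ((PresentedGroup.of false : PresentedGroup (dilateRels k l)) ^ (k+l)
        ≠ PresentedGroup.of false ^ k * PresentedGroup.of true ^ l) ∧
    ((PresentedGroup.of false : PresentedGroup (dilateRels k l)) ^ (k+l)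
        ≠ PresentedGroup.of true ^ (k+l)) ∧
    ((PresentedGroup.of false : PresentedGroup (dilateRels k l)) ^ k
        * PresentedGroup.of true ^ l ≠ PresentedGroup.of true ^ (k+l)) := by
  by_cases hkleq : k = l
  · exact distincts_ne_ab k l hk hl hkl hkleq
  · have he : k + l ≠ 0 := fun h => hkl (by omega)
    have hef : k + l ≠ k := fun h => hl (by omega)
    have h2f : k + l ≠ 2 * k := fun h => hkleq (by omega)
    obtain ⟨u, hu0, hrel, huk⟩ := exists_good_root (k+l) k he hk hef h2f
    have hu1 : u ≠ 1 := fun h => huk (by rw [h, one_zpow])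
    have hul : u ^ l ≠ 1 := by
      intro h
      apply huk
      have : u ^ (k+l) = u ^ k := by rw [zpow_add₀ hu0, h, mul_one]
      linear_combination this - hrel
    have hukl : u ^ (k+l) ≠ 1 := by
      intro h
      apply huk
      linear_combination (h - hrel) / 2
    exact distincts_ne k l u hu0 hu1 hrel huk hul hukl

theorem presented_group_dilate_sum_card_three
    (k l : ℤ) (hk : k ≠ 0) (hl : l ≠ 0) (hkl : k ≠ -l) :
    ∀ (a b : PresentedGroup (dilateRels k l)),
      a = PresentedGroup.of false → b = PresentedGroup.of true →
      b ^ k * a ^ l = a ^ k * b ^ l ∧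
      {z : PresentedGroup (dilateRels k l) |
          ∃ x ∈ ({a, b} : Set _), ∃ y ∈ ({a, b} : Set _), z = x ^ k * y ^ l}
        = {a ^ (k + l), a ^ k * b ^ l, b ^ (k + l)} ∧
      ({a ^ (k + l), a ^ k * b ^ l, b ^ (k + l)} :
          Set (PresentedGroup (dilateRels k l))).ncard = 3 := by
  intro a b ha hb
  subst ha hb
  set a := (PresentedGroup.of false : PresentedGroup (dilateRels k l)) with haa
  set b := (PresentedGroup.of true : PresentedGroup (dilateRels k l)) with hbb
  have hrel : b ^ k * a ^ l = a ^ k * b ^ l := by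
    symm
    rw [← mul_inv_eq_one]
    have hmem : (FreeGroup.of false) ^ k * (FreeGroup.of true) ^ l *
        ((FreeGroup.of true) ^ k * (FreeGroup.of false) ^ l)⁻¹
        ∈ Subgroup.normalClosure (dilateRels k l) :=
      Subgroup.subset_normalClosure (Set.mem_singleton _)
    have h1 : (PresentedGroup.mk (dilateRels k l))
        ((FreeGroup.of false) ^ k * (FreeGroup.of true) ^ l *
          ((FreeGroup.of true) ^ k * (FreeGroup.of false) ^ l)⁻¹) = 1 :=
      (QuotientGroup.eq_one_iff _).mpr hmem
    simp only [map_mul, map_inv, map_zpow] at h1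
    exact h1
  obtain ⟨d1, d2, d3⟩ := key_distinct k l hk hl hkl
  refine ⟨hrel, ?_, ?_⟩
  · ext z
    simp only [Set.mem_setOf_eq, Set.mem_insert_iff, Set.mem_singleton_iff]
    constructor
    · rintro ⟨x, hx, y, hy, rfl⟩
      rcases hx with rfl | rfl <;> rcases hy with rfl | rfl
      · left; rw [zpow_add]
      · right; left; rfl
      · right; left; exact hrel
      · right; right; rw [zpow_add]
    · rintro (rfl | rfl | rfl)
      · exact ⟨a, Or.inl rfl, a, Or.inl rfl, zpow_add a k l⟩
      · exact ⟨a, Or.inl rfl, b, Or.inr rfl, rfl⟩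
      · exact ⟨b, Or.inr rfl, b, Or.inr rfl, zpow_add b k l⟩
  · exact Set.ncard_eq_three.mpr ⟨_, _, _, d1, d2, d3, rfl⟩
end
end

section
/- Let k and l be positive integers with l ≥ k, and let α > 0 be a real number such that Σ_{i=k+1}^{k+l} α^{i/k} = Σ_{i=1}^{k} α^{i/k}. In the group G = ℝ ⋊ ℚ with multiplication (x,u)(y,v) = (x + α^u y, u + v), set e₀ = (α^{1/k}, 1/k) and e₁ = (0, 1/k). Then e₀^k e₁^l = e₁^k e₀^l. -/
/-- Multiplication of the semidirect product `ℝ ⋊ ℚ` under the action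
`u ↦ (x ↦ α^u x)`. -/
noncomputable def sdMul (α : ℝ) (p q : ℝ × ℚ) : ℝ × ℚ :=
  (p.1 + α ^ ((p.2 : ℝ)) * q.1, p.2 + q.2)

/-- `j`-th power with respect to `sdMul` (the identity is `(0, 0)`). -/
noncomputable def sdPow (α : ℝ) (p : ℝ × ℚ) : ℕ → ℝ × ℚ
  | 0 => (0, 0)
  | j + 1 => sdMul α (sdPow α p j) p

lemma sdPow_eq (α x : ℝ) (u : ℚ) (j : ℕ) :
    sdPow α (x, u) j
      = (∑ i ∈ Finset.range j, α ^ ((i : ℝ) * (u : ℝ)) * x, (j : ℚ) * u) := by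
  induction j with
  | zero => simp [sdPow]
  | succ n ih =>
      simp only [sdPow, sdMul, ih, Finset.sum_range_succ, Prod.mk.injEq]
      constructor
      · congr 2
        push_cast
        ring
      · push_cast
        ring

theorem generators_relation
    (k l : ℕ) (hk : 0 < k) (hl : k ≤ l) (α : ℝ) (hα : 0 < α)
    (hroot : ∑ i ∈ Finset.Icc (k + 1) (k + l), α ^ ((i : ℝ) / (k : ℝ))
              = ∑ i ∈ Finset.Icc 1 k, α ^ ((i : ℝ) / (k : ℝ))) :
    sdMul α (sdPow α (α ^ (1 / (k : ℝ)), 1 / (k : ℚ)) k)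
            (sdPow α ((0 : ℝ), 1 / (k : ℚ)) l)
      = sdMul α (sdPow α ((0 : ℝ), 1 / (k : ℚ)) k)
                (sdPow α (α ^ (1 / (k : ℝ)), 1 / (k : ℚ)) l) := by
  have hk0 : (k : ℝ) ≠ 0 := Nat.cast_ne_zero.mpr hk.ne'
  have hkq : (k : ℚ) * (1 / (k : ℚ)) = 1 := by
    have : (k : ℚ) ≠ 0 := Nat.cast_ne_zero.mpr hk.ne'
    field_simp
  have hcast : (((1 / (k : ℚ)) : ℚ) : ℝ) = 1 / (k : ℝ) := by push_cast; ring
  rw [sdPow_eq, sdPow_eq, sdPow_eq, sdPow_eq]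
  simp only [sdMul, hkq, hcast, mul_zero, Finset.sum_const, smul_zero, add_zero,
    Rat.cast_one, Real.rpow_one, zero_add]
  refine Prod.ext ?_ (by simp)
  show (∑ i ∈ Finset.range k, α ^ ((i : ℝ) * (1 / (k : ℝ))) * α ^ (1 / (k : ℝ)))
      = α * ∑ i ∈ Finset.range l, α ^ ((i : ℝ) * (1 / (k : ℝ))) * α ^ (1 / (k : ℝ))
  have hLHS : ∑ i ∈ Finset.range k, α ^ ((i : ℝ) * (1 / (k : ℝ))) * α ^ (1 / (k : ℝ))
      = ∑ i ∈ Finset.Icc 1 k, α ^ ((i : ℝ) / (k : ℝ)) := by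
    rw [← Finset.Ico_add_one_right_eq_Icc, Finset.sum_Ico_eq_sum_range]
    rw [show k + 1 - 1 = k from rfl]
    refine Finset.sum_congr rfl fun i _ => ?_
    rw [← Real.rpow_add hα]
    congr 1
    push_cast
    ring
  have hRHS : α * ∑ i ∈ Finset.range l, α ^ ((i : ℝ) * (1 / (k : ℝ))) * α ^ (1 / (k : ℝ))
      = ∑ i ∈ Finset.Icc (k + 1) (k + l), α ^ ((i : ℝ) / (k : ℝ)) := by
    rw [← Finset.Ico_add_one_right_eq_Icc, Finset.sum_Ico_eq_sum_range, Finset.mul_sum]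
    have : k + l + 1 - (k + 1) = l := by omega
    rw [this]
    refine Finset.sum_congr rfl fun i _ => ?_
    nth_rewrite 1 [show α = α ^ (1 : ℝ) by rw [Real.rpow_one]]
    rw [← Real.rpow_add hα, ← Real.rpow_add hα]
    congr 1
    push_cast
    field_simp
    ring
  rw [hLHS, hRHS, hroot]
end

section
/- Let k and l be positive integers. There exist a linearly orderable group G (written multiplicatively) and a 2-element subset X of G such that |X^{·k} X^{·l}| = 3 = 3|X| − 3, where X^{·k} X^{·l} = {x^k y^l : x, y ∈ X}. -/
/-- The group of positive affine maps of `ℝ`: pairs `(a, q)` with `q > 0`,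
representing `t ↦ q * t + a`. -/
def AG : Type := {p : ℝ × ℝ // 0 < p.2}

namespace AG

noncomputable instance : Mul AG :=
  ⟨fun g h => ⟨(g.1.1 + g.1.2 * h.1.1, g.1.2 * h.1.2), mul_pos g.2 h.2⟩⟩

noncomputable instance : One AG := ⟨⟨(0, 1), one_pos⟩⟩

noncomputable instance : Inv AG :=
  ⟨fun g => ⟨(-(g.1.1 / g.1.2), g.1.2⁻¹), inv_pos.2 g.2⟩⟩

@[simp] theorem mul_fst (g h : AG) : (g * h).1.1 = g.1.1 + g.1.2 * h.1.1 := rfl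
@[simp] theorem mul_snd (g h : AG) : (g * h).1.2 = g.1.2 * h.1.2 := rfl
@[simp] theorem one_fst : (1 : AG).1.1 = 0 := rfl
@[simp] theorem one_snd : (1 : AG).1.2 = 1 := rfl

theorem ext' {g h : AG} (h1 : g.1.1 = h.1.1) (h2 : g.1.2 = h.1.2) : g = h :=
  Subtype.ext (Prod.ext h1 h2)

noncomputable instance : Group AG where
  mul_assoc a b c := ext' (by simp; ring) (by simp; ring)
  one_mul a := ext' (by simp) (by simp)
  mul_one a := ext' (by simp) (by simp)
  inv_mul_cancel a := by
    have hq : a.1.2 ≠ 0 := ne_of_gt a.2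
    refine ext' ?_ ?_
    · show -(a.1.1 / a.1.2) + a.1.2⁻¹ * a.1.1 = 0
      field_simp
      ring
    · show a.1.2⁻¹ * a.1.2 = 1
      field_simp

theorem pow_snd (g : AG) (n : ℕ) : (g ^ n).1.2 = g.1.2 ^ n := by
  induction n with
  | zero => rw [pow_zero, pow_zero, one_snd]
  | succ n ih => rw [pow_succ, mul_snd, ih, pow_succ]

theorem pow_fst (g : AG) (n : ℕ) :
    (g ^ n).1.1 = g.1.1 * ∑ i ∈ Finset.range n, g.1.2 ^ i := by
  induction n with
  | zero => rw [pow_zero, one_fst]; simp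
  | succ n ih => rw [pow_succ, mul_fst, ih, pow_snd, geom_sum_succ']; ring

/-- The order-embedding into `ℝ ×ₗ ℝ` giving the lexicographic bi-invariant order. -/
def toLexFun (g : AG) : ℝ ×ₗ ℝ := toLex (g.1.2, g.1.1)

theorem toLexFun_injective : Function.Injective toLexFun := by
  intro g h hgh
  have : (g.1.2, g.1.1) = (h.1.2, h.1.1) := congrArg ofLex hgh
  rw [Prod.ext_iff] at this
  exact ext' this.2 this.1

noncomputable instance : LinearOrder AG := LinearOrder.lift' toLexFun toLexFun_injective

theorem lt_iff {g h : AG} :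
    g < h ↔ g.1.2 < h.1.2 ∨ (g.1.2 = h.1.2 ∧ g.1.1 < h.1.1) := by
  show toLexFun g < toLexFun h ↔ _
  exact Prod.Lex.lt_iff

theorem mul_lt_mul_left' (x y z : AG) (h : y < z) : x * y < x * z := by
  rw [lt_iff] at h ⊢
  rcases h with h | ⟨h1, h2⟩
  · exact Or.inl (by simpa using (mul_lt_mul_iff_right₀ x.2).2 h)
  · refine Or.inr ⟨by simp [h1], ?_⟩
    simpa using (mul_lt_mul_iff_right₀ x.2).2 h2

theorem mul_lt_mul_right' (x y z : AG) (h : y < z) : y * x < z * x := by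
  rw [lt_iff] at h ⊢
  rcases h with h | ⟨h1, h2⟩
  · exact Or.inl (by simpa using (mul_lt_mul_iff_left₀ x.2).2 h)
  · refine Or.inr ⟨by simp [h1], ?_⟩
    simpa [h1] using h2

end AG

theorem exists_linearly_orderable_group_two_element_set
    (k l : ℕ) (hk : 0 < k) (hl : 0 < l) :
    ∃ (G : Type) (_ : Group G) (_ : DecidableEq G) (lo : LinearOrder G),
      (∀ x y z : G, lo.lt y z → lo.lt (x * y) (x * z)) ∧
      (∀ x y z : G, lo.lt y z → lo.lt (y * x) (z * x)) ∧
      ∃ X : Finset G, X.card = 2 ∧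
        (Finset.image₂ (fun x y => x ^ k * y ^ l) X X).card = 3 := by
  letI instDec : DecidableEq AG := Classical.decEq _
  -- find a root q > 0 of q^k * (∑ i < l, q^i) = ∑ i < k, q^i
  set f : ℝ → ℝ := fun t => t ^ k * ∑ i ∈ Finset.range l, t ^ i -
    ∑ i ∈ Finset.range k, t ^ i with hf
  have hcont : ContinuousOn f (Set.Icc (0:ℝ) 2) := by
    apply Continuous.continuousOn
    fun_prop
  have hf0 : f 0 = -1 := by
    simp only [hf]
    rw [zero_pow hk.ne', geom_sum_eq (by norm_num : (0:ℝ) ≠ 1) k,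
      zero_pow hk.ne']
    norm_num
  have h2l : (2:ℝ) ≤ 2 ^ l := by
    calc (2:ℝ) = 2 ^ 1 := (pow_one 2).symm
      _ ≤ 2 ^ l := pow_le_pow_right₀ (by norm_num) hl
  have hf2 : 0 ≤ f 2 := by
    simp only [hf]
    rw [geom_sum_eq (by norm_num : (2:ℝ) ≠ 1) k, geom_sum_eq (by norm_num : (2:ℝ) ≠ 1) l]
    have hkpos : (0:ℝ) < 2 ^ k := pow_pos (by norm_num) k
    norm_num
    nlinarith [hkpos, h2l]
  obtain ⟨q, hqmem, hq0⟩ : ∃ q ∈ Set.Icc (0:ℝ) 2, f q = 0 := by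
    have hiv := intermediate_value_Icc (by norm_num : (0:ℝ) ≤ 2) hcont
    have h0 : (0:ℝ) ∈ Set.Icc (f 0) (f 2) := ⟨by rw [hf0]; norm_num, hf2⟩
    obtain ⟨q, hq, hq'⟩ := hiv h0
    exact ⟨q, hq, hq'⟩
  have hqpos : 0 < q := by
    rcases lt_or_eq_of_le hqmem.1 with h | h
    · exact h
    · rw [← h] at hq0; rw [hq0] at hf0; norm_num at hf0
  have hrel : q ^ k * ∑ i ∈ Finset.range l, q ^ i = ∑ i ∈ Finset.range k, q ^ i := by
    have h := hq0
    simp only [hf] at h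
    linarith
  -- the two elements
  set x : AG := ⟨(0, q), hqpos⟩ with hx
  set y : AG := ⟨(1, q), hqpos⟩ with hy
  have hxy : x ≠ y := by
    intro h
    have : (0:ℝ) = 1 := congrArg (fun g : AG => g.1.1) h
    norm_num at this
  have hxfst : x.1.1 = 0 := rfl
  have hyfst : y.1.1 = 1 := rfl
  have hxsnd : x.1.2 = q := rfl
  have hysnd : y.1.2 = q := rfl
  set c : ℝ := q ^ k * ∑ i ∈ Finset.range l, q ^ i with hc
  have hcpos : 0 < c := by
    apply mul_pos (pow_pos hqpos k)
    apply Finset.sum_pos (fun i _ => pow_pos hqpos i)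
    exact Finset.nonempty_range_iff.2 hl.ne'
  have hAfst : (x ^ k * x ^ l).1.1 = 0 := by
    rw [AG.mul_fst, AG.pow_fst, AG.pow_fst, hxfst]
    ring
  have hBfst : (x ^ k * y ^ l).1.1 = c := by
    rw [AG.mul_fst, AG.pow_fst, AG.pow_fst, AG.pow_snd, hxfst, hyfst, hc]
    ring
  have hCfst : (y ^ k * y ^ l).1.1 = 2 * c := by
    rw [AG.mul_fst, AG.pow_fst, AG.pow_fst, AG.pow_snd, hyfst, one_mul, ← hrel, hc]
    ring
  have hcomm : y ^ k * x ^ l = x ^ k * y ^ l := by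
    refine AG.ext' ?_ ?_
    · rw [hBfst, AG.mul_fst, AG.pow_fst, AG.pow_fst, hxfst, hyfst, ← hrel, hc]
      ring
    · rw [AG.mul_snd, AG.mul_snd, AG.pow_snd, AG.pow_snd, AG.pow_snd, AG.pow_snd]
  have himg : Finset.image₂ (fun a b : AG => a ^ k * b ^ l) {x, y} {x, y} =
      {x ^ k * x ^ l, x ^ k * y ^ l, y ^ k * y ^ l} := by
    rw [show ({x, y} : Finset AG) = insert x {y} from rfl,
      Finset.image₂_insert_left, Finset.image₂_singleton_left,
      Finset.image_insert, Finset.image_singleton,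
      Finset.image_insert, Finset.image_singleton]
    simp only [hcomm]
    ext g
    simp only [Finset.mem_union, Finset.mem_insert, Finset.mem_singleton]
    tauto
  have hAB : x ^ k * x ^ l ≠ x ^ k * y ^ l := by
    intro h
    have h' := congrArg (fun g : AG => g.1.1) h
    simp only [hAfst, hBfst] at h'
    exact hcpos.ne h'
  have hAC : x ^ k * x ^ l ≠ y ^ k * y ^ l := by
    intro h
    have h' := congrArg (fun g : AG => g.1.1) h
    simp only [hAfst, hCfst] at h'
    nlinarith
  have hBC : x ^ k * y ^ l ≠ y ^ k * y ^ l := by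
    intro h
    have h' := congrArg (fun g : AG => g.1.1) h
    simp only [hBfst, hCfst] at h'
    nlinarith
  refine ⟨AG, inferInstance, instDec, inferInstance,
    AG.mul_lt_mul_left', AG.mul_lt_mul_right', {x, y}, ?_, ?_⟩
  · rw [Finset.card_insert_of_notMem (by simpa using hxy), Finset.card_singleton]
  · rw [himg, Finset.card_insert_of_notMem (by simp [hAB, hAC]),
      Finset.card_insert_of_notMem (by simp [hBC]), Finset.card_singleton]
end

section
/- Let k and l be positive integers. There exist a linearly orderable group G and a 3-element subset X of G such that |X^{·k} X^{·l}| = 6 = 3|X| − 3. -/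
noncomputable section

/-- The underlying set of our group: `ℝ² ⋊ ℤ` (the `ℤ`-part acts by multiplication
by `b ^ n` on both real coordinates, for a fixed positive real `b`). -/
structure GG : Type where
  p : ℝ
  q : ℝ
  n : ℤ

instance : DecidableEq GG := fun x y =>
  decidable_of_iff (x.p = y.p ∧ x.q = y.q ∧ x.n = y.n)
    (by cases x; cases y; simp [GG.mk.injEq])

def gmul (b : ℝ) (x y : GG) : GG :=
  ⟨x.p + b ^ x.n * y.p, x.q + b ^ x.n * y.q, x.n + y.n⟩

def ginv (b : ℝ) (x : GG) : GG :=
  ⟨-(b ^ (-x.n) * x.p), -(b ^ (-x.n) * x.q), -x.n⟩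

def gGroup (b : ℝ) (hb : b ≠ 0) : Group GG where
  mul := gmul b
  one := ⟨0, 0, 0⟩
  inv := ginv b
  mul_assoc x y z := by
    show gmul b (gmul b x y) z = gmul b x (gmul b y z)
    simp only [gmul, GG.mk.injEq, zpow_add₀ hb]
    refine ⟨by ring, by ring, by ring⟩
  one_mul x := by
    show gmul b ⟨0,0,0⟩ x = x
    simp [gmul]
  mul_one x := by
    show gmul b x ⟨0,0,0⟩ = x
    simp [gmul]
  inv_mul_cancel x := by
    show gmul b (ginv b x) x = ⟨0,0,0⟩
    simp [gmul, ginv]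

def gf (x : GG) : ℤ ×ₗ (ℝ ×ₗ ℝ) := toLex (x.n, toLex (x.p, x.q))

lemma gf_inj : Function.Injective gf := by
  intro x y h
  cases x; cases y
  simp only [gf, toLex_inj, Prod.mk.injEq] at h
  simp_all

def gord : LinearOrder GG := LinearOrder.lift' gf gf_inj

def glt (x y : GG) : Prop :=
  x.n < y.n ∨ (x.n = y.n ∧ (x.p < y.p ∨ (x.p = y.p ∧ x.q < y.q)))

lemma gord_lt (x y : GG) : gord.lt x y ↔ glt x y := by
  show gf x < gf y ↔ _
  unfold gf glt
  rw [Prod.Lex.lt_iff, Prod.Lex.lt_iff]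
  exact Iff.rfl

theorem exists_linearly_orderable_group_three_element_set
    (k l : ℕ) (hk : 0 < k) (hl : 0 < l) :
    ∃ (G : Type) (_ : Group G) (_ : DecidableEq G) (lo : LinearOrder G),
      (∀ x y z : G, lo.lt y z → lo.lt (x * y) (x * z)) ∧
      (∀ x y z : G, lo.lt y z → lo.lt (y * x) (z * x)) ∧
      ∃ X : Finset G, X.card = 3 ∧
        (Finset.image₂ (fun x y => x ^ k * y ^ l) X X).card = 6 := by
  -- find a positive root b of  b^k * (∑_{j<l} b^j) = ∑_{j<k} b^j
  obtain ⟨b, hb, hroot⟩ :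
      ∃ b : ℝ, 0 < b ∧
        b ^ k * (∑ j ∈ Finset.range l, b ^ j) = ∑ j ∈ Finset.range k, b ^ j := by
    set g : ℝ → ℝ :=
      fun x => x ^ k * (∑ j ∈ Finset.range l, x ^ j) - ∑ j ∈ Finset.range k, x ^ j with hg
    have hcont : Continuous g := by
      apply Continuous.sub
      · exact (continuous_pow k).mul (continuous_finset_sum _ fun j _ => continuous_pow j)
      · exact continuous_finset_sum _ fun j _ => continuous_pow j
    have hg0 : g 0 = -1 := by
      have h1 : ∑ j ∈ Finset.range k, (0:ℝ) ^ j = 1 := by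
        rw [Finset.sum_congr rfl fun j _ => zero_pow_eq j]
        simp [Finset.sum_ite_eq', Finset.mem_range, hk]
      simp [hg, h1, zero_pow hk.ne']
    have hgx : 0 ≤ g (k + 1) := by
      set x : ℝ := (k : ℝ) + 1 with hx
      have hx1 : (1:ℝ) ≤ x := by rw [hx]; linarith [Nat.cast_nonneg (α := ℝ) k]
      have hSl : (1:ℝ) ≤ ∑ j ∈ Finset.range l, x ^ j := by
        calc (1:ℝ) = x ^ 0 := by simp
        _ ≤ ∑ j ∈ Finset.range l, x ^ j := by
            apply Finset.single_le_sum (f := fun j => x ^ j)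
            · intro j _; positivity
            · simpa using hl
      have hSk : ∑ j ∈ Finset.range k, x ^ j ≤ k * x ^ (k-1) := by
        calc ∑ j ∈ Finset.range k, x ^ j ≤ ∑ _j ∈ Finset.range k, x ^ (k-1) := by
              apply Finset.sum_le_sum
              intro j hj
              rw [Finset.mem_range] at hj
              exact pow_le_pow_right₀ hx1 (by omega : j ≤ k - 1)
        _ = k * x ^ (k-1) := by simp [mul_comm]
      have hxk : (k : ℝ) * x ^ (k-1) ≤ x ^ k := by
        have : (k:ℝ) * x ^ (k-1) ≤ x * x ^ (k-1) := by
          apply mul_le_mul_of_nonneg_right _ (by positivity)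
          simp [hx]
        calc (k:ℝ) * x ^ (k-1) ≤ x * x ^ (k-1) := this
        _ = x ^ (k-1+1) := by rw [pow_succ]; ring
        _ = x ^ k := by congr 1; omega
      have hxkSl : x ^ k ≤ x ^ k * ∑ j ∈ Finset.range l, x ^ j :=
        le_mul_of_one_le_right (by positivity) hSl
      simp only [hg]
      linarith
    have hsub := intermediate_value_Icc (by positivity : (0:ℝ) ≤ (k:ℝ)+1) hcont.continuousOn
    have h0mem : (0:ℝ) ∈ Set.Icc (g 0) (g ((k:ℝ)+1)) := ⟨by rw [hg0]; norm_num, hgx⟩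
    obtain ⟨b, hbmem, hgb⟩ := hsub h0mem
    refine ⟨b, ?_, by simpa [hg, sub_eq_zero] using hgb⟩
    rcases hbmem.1.lt_or_eq with h | h
    · exact h
    · exfalso; rw [← h] at hgb; rw [hg0] at hgb; norm_num at hgb
  letI instG : Group GG := gGroup b hb.ne'
  have hbz : ∀ m : ℤ, (0:ℝ) < b ^ m := fun m => zpow_pos hb m
  -- the order is bi-invariant
  have hleft : ∀ x y z : GG, gord.lt y z → gord.lt (x * y) (x * z) := by
    intro x y z h
    rw [gord_lt] at h ⊢
    have e1 : x * y = gmul b x y := rfl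
    have e2 : x * z = gmul b x z := rfl
    rw [e1, e2]
    rcases h with h | ⟨h1, h2 | ⟨h2, h3⟩⟩
    · exact Or.inl (by simpa [gmul] using add_lt_add_left h x.n)
    · refine Or.inr ⟨by simp [gmul, h1], Or.inl ?_⟩
      simp only [gmul]
      exact add_lt_add_right (mul_lt_mul_of_pos_left h2 (hbz x.n)) x.p
    · refine Or.inr ⟨by simp [gmul, h1], Or.inr ⟨by simp [gmul, h2], ?_⟩⟩
      simp only [gmul]
      exact add_lt_add_right (mul_lt_mul_of_pos_left h3 (hbz x.n)) x.q
  have hright : ∀ x y z : GG, gord.lt y z → gord.lt (y * x) (z * x) := by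
    intro x y z h
    rw [gord_lt] at h ⊢
    have e1 : y * x = gmul b y x := rfl
    have e2 : z * x = gmul b z x := rfl
    rw [e1, e2]
    rcases h with h | ⟨h1, h2 | ⟨h2, h3⟩⟩
    · exact Or.inl (by simpa [gmul] using add_lt_add_right h x.n)
    · refine Or.inr ⟨by simp [gmul, h1], Or.inl ?_⟩
      simp only [gmul, h1]
      exact add_lt_add_left h2 _
    · refine Or.inr ⟨by simp [gmul, h1], Or.inr ⟨by simp [gmul, h1, h2], ?_⟩⟩
      simp only [gmul, h1]
      exact add_lt_add_left h3 _
  -- powers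
  have hpow : ∀ (p q : ℝ) (m : ℕ),
      (⟨p, q, 1⟩ : GG) ^ m =
        ⟨p * ∑ j ∈ Finset.range m, b ^ j, q * ∑ j ∈ Finset.range m, b ^ j, (m : ℤ)⟩ := by
    intro p q m
    induction m with
    | zero => simp [show (1:GG) = ⟨0,0,0⟩ from rfl]
    | succ m ih =>
      rw [pow_succ, ih]
      show gmul b _ _ = _
      simp only [gmul, GG.mk.injEq, Finset.sum_range_succ]
      refine ⟨?_, ?_, by push_cast; ring⟩ <;>
        · rw [show ((m:ℤ)) = ((m:ℕ):ℤ) from rfl, zpow_natCast]; ring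
  set Sk : ℝ := ∑ j ∈ Finset.range k, b ^ j with hSk
  set Sl : ℝ := ∑ j ∈ Finset.range l, b ^ j with hSl
  have hval : ∀ p q p' q' : ℝ,
      (⟨p, q, 1⟩ : GG) ^ k * (⟨p', q', 1⟩ : GG) ^ l =
        ⟨p * Sk + b ^ k * (p' * Sl), q * Sk + b ^ k * (q' * Sl), (k : ℤ) + (l : ℤ)⟩ := by
    intro p q p' q'
    rw [hpow, hpow]
    show gmul b _ _ = _
    simp only [gmul, GG.mk.injEq]
    refine ⟨?_, ?_, trivial⟩ <;> · rw [zpow_natCast]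
  set K : ℤ := (k : ℤ) + (l : ℤ) with hK
  set A : ℝ := b * Sk with hA
  have hApos : 0 < A := by
    apply mul_pos hb
    apply Finset.sum_pos (fun j _ => pow_pos hb j)
    exact Finset.nonempty_range_iff.mpr hk.ne'
  -- the nine products
  have h00 : (⟨0,0,1⟩ : GG) ^ k * (⟨0,0,1⟩ : GG) ^ l = ⟨0, 0, K⟩ := by
    rw [hval]; simp
  have h01 : (⟨0,0,1⟩ : GG) ^ k * (⟨b,0,1⟩ : GG) ^ l = ⟨A, 0, K⟩ := by
    rw [hval]; simp only [GG.mk.injEq]; refine ⟨?_, by ring, trivial⟩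
    rw [hA, ← hroot]; ring
  have h02 : (⟨0,0,1⟩ : GG) ^ k * (⟨0,b,1⟩ : GG) ^ l = ⟨0, A, K⟩ := by
    rw [hval]; simp only [GG.mk.injEq]; refine ⟨by ring, ?_, trivial⟩
    rw [hA, ← hroot]; ring
  have h10 : (⟨b,0,1⟩ : GG) ^ k * (⟨0,0,1⟩ : GG) ^ l = ⟨A, 0, K⟩ := by
    rw [hval]; simp only [GG.mk.injEq]; exact ⟨by rw [hA]; ring, by ring, trivial⟩
  have h20 : (⟨0,b,1⟩ : GG) ^ k * (⟨0,0,1⟩ : GG) ^ l = ⟨0, A, K⟩ := by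
    rw [hval]; simp only [GG.mk.injEq]; exact ⟨by ring, by rw [hA]; ring, trivial⟩
  have h11 : (⟨b,0,1⟩ : GG) ^ k * (⟨b,0,1⟩ : GG) ^ l = ⟨A + A, 0, K⟩ := by
    rw [hval]; simp only [GG.mk.injEq]; refine ⟨?_, by ring, trivial⟩
    rw [hA, ← hroot]; ring
  have h22 : (⟨0,b,1⟩ : GG) ^ k * (⟨0,b,1⟩ : GG) ^ l = ⟨0, A + A, K⟩ := by
    rw [hval]; simp only [GG.mk.injEq]; refine ⟨by ring, ?_, trivial⟩
    rw [hA, ← hroot]; ring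
  have h12 : (⟨b,0,1⟩ : GG) ^ k * (⟨0,b,1⟩ : GG) ^ l = ⟨A, A, K⟩ := by
    rw [hval]; simp only [GG.mk.injEq]
    refine ⟨by rw [hA]; ring, ?_, trivial⟩
    rw [hA, ← hroot]; ring
  have h21 : (⟨0,b,1⟩ : GG) ^ k * (⟨b,0,1⟩ : GG) ^ l = ⟨A, A, K⟩ := by
    rw [hval]; simp only [GG.mk.injEq]
    refine ⟨?_, by rw [hA]; ring, trivial⟩
    rw [hA, ← hroot]; ring
  refine ⟨GG, instG, inferInstance, gord, hleft, hright,
    ({⟨0,0,1⟩, ⟨b,0,1⟩, ⟨0,b,1⟩} : Finset GG), ?_, ?_⟩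
  · rw [Finset.card_insert_of_notMem (by simp [GG.mk.injEq, hb.ne', hb.ne]),
      Finset.card_insert_of_notMem (by simp [GG.mk.injEq, hb.ne', hb.ne]),
      Finset.card_singleton]
  · have himg : Finset.image₂ (fun x y : GG => x ^ k * y ^ l)
        ({⟨0,0,1⟩, ⟨b,0,1⟩, ⟨0,b,1⟩} : Finset GG) ({⟨0,0,1⟩, ⟨b,0,1⟩, ⟨0,b,1⟩} : Finset GG) =
        ({⟨0,0,K⟩, ⟨A,0,K⟩, ⟨0,A,K⟩, ⟨A+A,0,K⟩, ⟨A,A,K⟩, ⟨0,A+A,K⟩} : Finset GG) := by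
      ext z
      simp only [Finset.mem_image₂, Finset.mem_insert, Finset.mem_singleton]
      constructor
      · rintro ⟨x, hx, y, hy, rfl⟩
        rcases hx with rfl | rfl | rfl <;> rcases hy with rfl | rfl | rfl <;>
          simp only [h00, h01, h02, h10, h11, h12, h20, h21, h22] <;> tauto
      · rintro (rfl | rfl | rfl | rfl | rfl | rfl)
        · exact ⟨_, Or.inl rfl, _, Or.inl rfl, h00⟩
        · exact ⟨_, Or.inl rfl, _, Or.inr (Or.inl rfl), h01⟩
        · exact ⟨_, Or.inl rfl, _, Or.inr (Or.inr rfl), h02⟩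
        · exact ⟨_, Or.inr (Or.inl rfl), _, Or.inr (Or.inl rfl), h11⟩
        · exact ⟨_, Or.inr (Or.inl rfl), _, Or.inr (Or.inr rfl), h12⟩
        · exact ⟨_, Or.inr (Or.inr rfl), _, Or.inr (Or.inr rfl), h22⟩
    rw [himg]
    have hA0 : A ≠ 0 := hApos.ne'
    have hA0' : (0:ℝ) ≠ A := hApos.ne
    have hAA : A ≠ A + A := ne_of_lt (by linarith)
    have hAA' : A + A ≠ A := ne_of_gt (by linarith)
    have hAA0 : A + A ≠ 0 := ne_of_gt (by linarith)
    have hAA0' : (0:ℝ) ≠ A + A := ne_of_lt (by linarith)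
    rw [Finset.card_insert_of_notMem (by simp [GG.mk.injEq, hA0, hA0', hAA, hAA', hAA0, hAA0']),
      Finset.card_insert_of_notMem (by simp [GG.mk.injEq, hA0, hA0', hAA, hAA', hAA0, hAA0']),
      Finset.card_insert_of_notMem (by simp [GG.mk.injEq, hA0, hA0', hAA, hAA', hAA0, hAA0']),
      Finset.card_insert_of_notMem (by simp [GG.mk.injEq, hA0, hA0', hAA, hAA', hAA0, hAA0']),
      Finset.card_insert_of_notMem (by simp [GG.mk.injEq, hA0, hA0', hAA, hAA', hAA0, hAA0']),
      Finset.card_singleton]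

end
end
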